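/- arXiv:2210.07671 — 6 statements merged into one kernel-verified Lean document; each statement's English description precedes it below -/
import Mathlib

section
/- Let C be the middle-third Cantor set, i.e., the set of all sums ∑_{i≥1} a_i/3^i with a_i ∈ {0,2}. Then C + C = [0,2], where C + C denotes the Minkowski sum {x + y : x, y ∈ C}. -/
open Pointwise

/-- The linear Cantor set with digits in `A` in base `n`. -/
def linCantor (n : ℕ) (A : Set ℕ) : Set ℝ :=
  {x | ∃ a : ℕ → ℕ, (∀ i, a i ∈ A) ∧ x = ∑' i : ℕ, (a i : ℝ) / n ^ (i + 1)}

lemma summable_digits (a : ℕ → ℕ) (h : ∀ i, a i ≤ 2) :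
    Summable (fun i => (a i : ℝ) / 3 ^ (i + 1)) := by
  refine Summable.of_nonneg_of_le (f := fun i : ℕ => (1/3 : ℝ) ^ i)
    (fun i => ?_) (fun i => ?_)
    (summable_geometric_of_lt_one (r := 1/3) (by norm_num) (by norm_num))
  · positivity
  have h3 : (a i : ℝ) ≤ 3 := by
    have := h i; exact_mod_cast this.trans (by norm_num)
  rw [div_le_iff₀ (by positivity : (0:ℝ) < 3 ^ (i+1))]
  have he : ((1:ℝ)/3) ^ i * 3 ^ (i+1) = 3 := by
    rw [div_pow, one_pow, div_mul_eq_mul_div, pow_succ]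
    field_simp
  rw [he]; exact h3

lemma tsum_two_digits : ∑' i : ℕ, (2 : ℝ)/3^(i+1) = 1 := by
  have h1 : ∀ i : ℕ, (2:ℝ)/3^(i+1) = (2/3) * (1/3)^i := by
    intro i
    rw [div_pow, one_pow, pow_succ]
    field_simp
  rw [tsum_congr h1, tsum_mul_left, tsum_geometric_of_lt_one (by norm_num) (by norm_num)]
  norm_num

lemma exists_digits (x : ℝ) (hx0 : 0 ≤ x) (hx1 : x < 1) :
    ∃ b : ℕ → ℕ, (∀ i, b i ≤ 2) ∧ HasSum (fun i => (b i : ℝ)/3^(i+1)) x := by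
  set f : ℕ → ℕ := fun n => ⌊x * 3^n⌋₊ with hf
  have hfle : ∀ n, (f n : ℝ) ≤ x * 3^n := fun n => Nat.floor_le (by positivity)
  have hflt : ∀ n, x * 3^n < f n + 1 := fun n => Nat.lt_floor_add_one _
  have hf0 : f 0 = 0 := by
    simp only [hf, pow_zero, mul_one]
    exact Nat.floor_eq_zero.mpr hx1
  have hstep : ∀ n, 3 * f n ≤ f (n+1) ∧ f (n+1) < 3 * f n + 3 := by
    intro n
    have h1 := hfle n
    have h2 := hflt n
    have e : x * 3^(n+1) = (x * 3^n) * 3 := by ring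
    constructor
    · apply Nat.le_floor
      push_cast
      rw [e]; linarith
    · rw [hf]
      apply (Nat.floor_lt (by positivity)).mpr
      push_cast
      rw [e]; linarith
  set b : ℕ → ℕ := fun i => f (i+1) - 3 * f i with hbdef
  have hb : ∀ i, b i ≤ 2 := fun i => by
    have := hstep i; simp only [hbdef]; omega
  have hbcast : ∀ i, (b i : ℝ) = (f (i+1) : ℝ) - 3 * f i := by
    intro i
    rw [hbdef]
    have := (hstep i).1
    push_cast [Nat.cast_sub this]
    ring
  have hpart : ∀ n, ∑ i ∈ Finset.range n, (b i : ℝ)/3^(i+1) = (f n : ℝ) / 3^n := by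
    intro n
    induction n with
    | zero => simp [hf0]
    | succ n ih =>
      rw [Finset.sum_range_succ, ih, hbcast n]
      have hp : (0:ℝ) < 3^n := by positivity
      field_simp
      ring
  have htend : Filter.Tendsto (fun n => (f n : ℝ)/3^n) Filter.atTop (nhds x) := by
    apply tendsto_of_tendsto_of_tendsto_of_le_of_le
      (g := fun n : ℕ => x - (1/3 : ℝ)^n) (h := fun _ : ℕ => x)
    · have : Filter.Tendsto (fun n : ℕ => (1/3:ℝ)^n) Filter.atTop (nhds 0) :=
        tendsto_pow_atTop_nhds_zero_of_lt_one (by norm_num) (by norm_num)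
      simpa using tendsto_const_nhds.sub this
    · exact tendsto_const_nhds
    · intro n
      dsimp only
      have hp : (0:ℝ) < 3^n := by positivity
      have h13 : (1/3:ℝ)^n = 1/3^n := by rw [div_pow, one_pow]
      rw [h13, sub_le_iff_le_add, ← add_div, le_div_iff₀ hp]
      linarith [hflt n]
    · intro n
      dsimp only
      have hp : (0:ℝ) < 3^n := by positivity
      rw [div_le_iff₀ hp]
      exact hfle n
  have hsum := (summable_digits b hb).hasSum
  have ht := hsum.tendsto_sum_nat
  have heq : (fun n => ∑ i ∈ Finset.range n, (b i:ℝ)/3^(i+1))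
      = fun n => (f n : ℝ)/3^n := funext hpart
  rw [heq] at ht
  have : ∑' i, (b i : ℝ)/3^(i+1) = x := tendsto_nhds_unique ht htend
  exact ⟨b, hb, this ▸ hsum⟩

lemma one_mem_cantor : (1 : ℝ) ∈ linCantor 3 {0, 2} := by
  refine ⟨fun _ => 2, fun i => Or.inr rfl, ?_⟩
  rw [← tsum_two_digits]
  push_cast
  rfl

lemma cantor_subset_Icc : linCantor 3 {0, 2} ⊆ Set.Icc (0:ℝ) 1 := by
  rintro z ⟨a, ha, rfl⟩
  have hle : ∀ i, a i ≤ 2 := by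
    intro i
    have := ha i
    simp only [Set.mem_insert_iff, Set.mem_singleton_iff] at this
    omega
  constructor
  · exact tsum_nonneg fun i => by positivity
  · calc ∑' i, (a i : ℝ)/3^(i+1)
        ≤ ∑' i, (2 : ℝ)/3^(i+1) := by
          apply Summable.tsum_le_tsum _ (summable_digits a hle)
          · simpa using summable_digits (fun _ => 2) (fun _ => le_refl 2)
          · intro i
            gcongr
            exact_mod_cast hle i
      _ = 1 := tsum_two_digits

/-- The middle-third Cantor set `C` satisfies `C + C = [0,2]`. -/
theorem cantor_add_cantor_eq_Icc :
    linCantor 3 {0, 2} + linCantor 3 {0, 2} = Set.Icc (0 : ℝ) 2 := by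
  apply Set.Subset.antisymm
  · rintro x hx
    rw [Set.mem_add] at hx
    obtain ⟨u, hu, v, hv, rfl⟩ := hx
    have h1 := cantor_subset_Icc hu
    have h2 := cantor_subset_Icc hv
    exact ⟨by linarith [h1.1, h2.1], by linarith [h1.2, h2.2]⟩
  · rintro x ⟨hx0, hx2⟩
    by_cases hx : x = 2
    · subst hx
      exact Set.mem_add.mpr ⟨1, one_mem_cantor, 1, one_mem_cantor, by norm_num⟩
    · have hy0 : 0 ≤ x/2 := by linarith
      have hy1 : x/2 < 1 := by
        have : x < 2 := lt_of_le_of_ne hx2 hx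
        linarith
      obtain ⟨b, hb, hsum⟩ := exists_digits (x/2) hy0 hy1
      set a : ℕ → ℕ := fun i => if b i = 2 then 2 else 0 with hadef
      set c : ℕ → ℕ := fun i => if 1 ≤ b i then 2 else 0 with hcdef
      have hamem : ∀ i, a i ∈ ({0, 2} : Set ℕ) := by
        intro i; rw [hadef]; dsimp only; split <;> simp
      have hcmem : ∀ i, c i ∈ ({0, 2} : Set ℕ) := by
        intro i; rw [hcdef]; dsimp only; split <;> simp
      have ha2 : ∀ i, a i ≤ 2 := fun i => by rw [hadef]; dsimp only; split <;> omega
      have hc2 : ∀ i, c i ≤ 2 := fun i => by rw [hcdef]; dsimp only; split <;> omega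
      have hac : ∀ i, (a i : ℝ)/3^(i+1) + (c i : ℝ)/3^(i+1) = 2 * ((b i : ℝ)/3^(i+1)) := by
        intro i
        have hn : a i + c i = 2 * b i := by
          have hbi := hb i
          rw [hadef, hcdef]; dsimp only
          interval_cases h : b i <;> simp
        rw [← add_div, ← Nat.cast_add, hn]
        push_cast
        ring
      have hsa := (summable_digits a ha2).hasSum
      have hsc := (summable_digits c hc2).hasSum
      have hadd := hsa.add hsc
      rw [show (fun i => (a i : ℝ)/3^(i+1) + (c i : ℝ)/3^(i+1))
          = fun i => 2 * ((b i : ℝ)/3^(i+1)) from funext hac] at hadd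
      have h2 : HasSum (fun i => 2 * ((b i : ℝ)/3^(i+1))) x := by
        have := hsum.mul_left 2
        rw [show (2:ℝ) * (x/2) = x by ring] at this
        exact this
      have hfin : (∑' i, (a i : ℝ)/3^(i+1)) + (∑' i, (c i : ℝ)/3^(i+1)) = x :=
        hadd.unique h2
      exact Set.mem_add.mpr ⟨_, ⟨a, hamem, rfl⟩, _, ⟨c, hcmem, rfl⟩, hfin⟩
end

section
/- Let C be the middle-third Cantor set. For Lebesgue-almost every z ∈ [0,2], the set of pairs (x,y) ∈ C × C with x + y = z has the cardinality of the continuum. -/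
open Pointwise

open Filter Finset Pointwise
open scoped ENNReal

noncomputable def cval (c : ℕ → ℕ) : ℝ := ∑' i, (c i : ℝ) / 3 ^ (i + 1)

lemma geom_summable : Summable (fun i : ℕ => (2 : ℝ) / 3 ^ (i + 1)) := by
  have : (fun i : ℕ => (2 : ℝ) / 3 ^ (i + 1)) = fun i : ℕ => (2/3) * (1/3) ^ i := by
    funext i; rw [pow_succ, one_div, inv_pow]; ring
  rw [this]
  exact (summable_geometric_of_lt_one (by norm_num) (by norm_num)).mul_left _

lemma geom_tsum : ∑' i : ℕ, (2 : ℝ) / 3 ^ (i + 1) = 1 := by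
  have : (fun i : ℕ => (2 : ℝ) / 3 ^ (i + 1)) = fun i : ℕ => (2/3) * (1/3) ^ i := by
    funext i; rw [pow_succ, one_div, inv_pow]; ring
  rw [this, tsum_mul_left, tsum_geometric_of_lt_one (by norm_num) (by norm_num)]
  norm_num

lemma cval_summable {c : ℕ → ℕ} (hc : ∀ i, c i ≤ 2) :
    Summable (fun i => (c i : ℝ) / 3 ^ (i + 1)) := by
  refine Summable.of_nonneg_of_le (fun i => by positivity) (fun i => ?_) geom_summable
  gcongr
  exact_mod_cast hc i

lemma cval_nonneg {c : ℕ → ℕ} : 0 ≤ cval c :=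
  tsum_nonneg (fun i => by positivity)

lemma cval_le_one {c : ℕ → ℕ} (hc : ∀ i, c i ≤ 2) : cval c ≤ 1 := by
  rw [← geom_tsum]
  refine Summable.tsum_le_tsum (fun i => ?_) (cval_summable hc) geom_summable
  gcongr
  exact_mod_cast hc i

lemma cval_split {c : ℕ → ℕ} (hc : ∀ i, c i ≤ 2) (n : ℕ) :
    cval c = (∑ i ∈ range n, (c i : ℝ) / 3 ^ (i + 1)) + cval (fun i => c (i + n)) / 3 ^ n := by
  have h := Summable.sum_add_tsum_nat_add (f := fun i => (c i : ℝ) / 3 ^ (i + 1)) n (cval_summable hc)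
  rw [cval, ← h]
  congr 1
  rw [cval, ← tsum_div_const]
  congr 1
  funext i
  rw [div_div, ← pow_add]
  ring_nf

lemma cval_two_mul {c : ℕ → ℕ} : cval (fun i => 2 * c i) = 2 * cval c := by
  rw [cval, cval, ← tsum_mul_left]
  congr 1; funext i; push_cast; ring

lemma cval_add {a b : ℕ → ℕ} (ha : ∀ i, a i ≤ 2) (hb : ∀ i, b i ≤ 2) :
    cval (fun i => a i + b i) = cval a + cval b := by
  rw [cval, cval, cval, ← Summable.tsum_add (cval_summable ha) (cval_summable hb)]
  congr 1; funext i; push_cast; ring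


lemma cval_lt {c d : ℕ → ℕ} (hc : ∀ i, c i ≤ 2) (hd : ∀ i, d i ≤ 2)
    (j : ℕ) (hpre : ∀ i, i < j → c i = d i) (hj : d j + 2 ≤ c j) : cval d < cval c := by
  rw [cval_split hc (j + 1), cval_split hd (j + 1), Finset.sum_range_succ,
    Finset.sum_range_succ]
  have hP : ∑ i ∈ range j, (c i : ℝ) / 3 ^ (i + 1)
      = ∑ i ∈ range j, (d i : ℝ) / 3 ^ (i + 1) :=
    Finset.sum_congr rfl fun i hi => by rw [hpre i (Finset.mem_range.1 hi)]
  have hE : (0 : ℝ) < 3 ^ (j + 1) := by positivity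
  have hTd : cval (fun i => d (i + (j + 1))) ≤ 1 := cval_le_one fun i => hd _
  have hTc : (0 : ℝ) ≤ cval (fun i => c (i + (j + 1))) := cval_nonneg
  have hcd : (d j : ℝ) + 2 ≤ (c j : ℝ) := by exact_mod_cast hj
  have h2 : ((d j : ℝ) + cval (fun i => d (i + (j + 1)))) / 3 ^ (j + 1)
      < ((c j : ℝ) + cval (fun i => c (i + (j + 1)))) / 3 ^ (j + 1) :=
    (div_lt_div_iff_of_pos_right hE).2 (by linarith)
  rw [add_div, add_div] at h2
  rw [hP]
  linarith

lemma cval_inj {c d : ℕ → ℕ} (hc : ∀ i, c i = 0 ∨ c i = 2) (hd : ∀ i, d i = 0 ∨ d i = 2)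
    (h : cval c = cval d) : c = d := by
  by_contra hne
  have hex : ∃ j, c j ≠ d j := Function.ne_iff.1 hne
  classical
  have hj : c (Nat.find hex) ≠ d (Nat.find hex) := Nat.find_spec hex
  set j := Nat.find hex with hjdef
  have hpre : ∀ i, i < j → c i = d i := fun i hi => by
    by_contra hne'
    exact absurd hi (not_lt.2 (Nat.find_le hne'))
  have hc2 : ∀ i, c i ≤ 2 := fun i => by rcases hc i with h' | h' <;> omega
  have hd2 : ∀ i, d i ≤ 2 := fun i => by rcases hd i with h' | h' <;> omega
  rcases hc j with h1 | h1 <;> rcases hd j with h2 | h2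
  · exact hj (h1.trans h2.symm)
  · exact absurd h (ne_of_lt (cval_lt (c := d) (d := c) hd2 hc2 j
      (fun i hi => (hpre i hi).symm) (by omega)))
  · exact absurd h.symm (ne_of_lt (cval_lt (c := c) (d := d) hc2 hd2 j hpre (by omega)))
  · exact hj (h1.trans h2.symm)

noncomputable def dig (x : ℝ) : ℕ := min ⌊3 * x⌋₊ 2

noncomputable def rem (w : ℝ) : ℕ → ℝ
  | 0 => w
  | n + 1 => 3 * rem w n - dig (rem w n)

lemma dig_le_two (x : ℝ) : dig x ≤ 2 := min_le_right _ _

lemma dig_step {x : ℝ} (h0 : 0 ≤ x) (h1 : x ≤ 1) :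
    0 ≤ 3 * x - dig x ∧ 3 * x - dig x ≤ 1 := by
  unfold dig
  rcases le_or_gt (⌊3 * x⌋₊) 2 with h | h
  · rw [min_eq_left h]
    have hf := Nat.floor_le (by linarith : (0 : ℝ) ≤ 3 * x)
    have hf2 := Nat.lt_floor_add_one (3 * x)
    constructor <;> linarith
  · rw [min_eq_right h.le]
    have h3 : ((3 : ℕ) : ℝ) ≤ 3 * x :=
      (Nat.le_floor_iff (by linarith : (0 : ℝ) ≤ 3 * x)).1 (by omega)
    push_cast at h3
    constructor <;> [push_cast; push_cast] <;> linarith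

lemma rem_mem {w : ℝ} (h0 : 0 ≤ w) (h1 : w ≤ 1) (n : ℕ) :
    0 ≤ rem w n ∧ rem w n ≤ 1 := by
  induction n with
  | zero => exact ⟨h0, h1⟩
  | succ n ih => exact dig_step ih.1 ih.2

lemma rem_eq {w : ℝ} (n : ℕ) :
    w = (∑ i ∈ range n, (dig (rem w i) : ℝ) / 3 ^ (i + 1)) + rem w n / 3 ^ n := by
  induction n with
  | zero => simp [rem]
  | succ n ih =>
    rw [Finset.sum_range_succ]
    have hstep : rem w (n + 1) = 3 * rem w n - dig (rem w n) := rfl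
    rw [hstep]
    conv_lhs => rw [ih]
    have h1 : (3 : ℝ) ^ (n + 1) = 3 * 3 ^ n := by ring
    rw [h1]
    have h2 : (0 : ℝ) < 3 ^ n := by positivity
    field_simp
    ring

lemma exists_expansion {w : ℝ} (h0 : 0 ≤ w) (h1 : w ≤ 1) :
    ∃ c : ℕ → ℕ, (∀ i, c i ≤ 2) ∧ w = cval c := by
  refine ⟨fun n => dig (rem w n), fun i => dig_le_two _, ?_⟩
  set f := fun i : ℕ => (dig (rem w i) : ℝ) / 3 ^ (i + 1) with hf
  have hs : Summable f := cval_summable fun i => dig_le_two _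
  have hbound : ∀ n : ℕ, w - (1 / 3 : ℝ) ^ n ≤ ∑ i ∈ range n, f i
      ∧ ∑ i ∈ range n, f i ≤ w := by
    intro n
    have heq := rem_eq (w := w) n
    have hr := rem_mem h0 h1 n
    have hE : (0 : ℝ) < 3 ^ n := by positivity
    have hb : rem w n / 3 ^ n ≤ (1 / 3 : ℝ) ^ n := by
      rw [div_pow, one_pow]
      gcongr <;> first | exact hr.2 | norm_num
    have hb0 : 0 ≤ rem w n / 3 ^ n := div_nonneg hr.1 hE.le
    constructor <;> [skip; skip] <;> simp only [hf] <;> linarith [heq]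
  have hlim : Filter.Tendsto (fun n => ∑ i ∈ range n, f i) Filter.atTop (nhds w) := by
    have h1n : Filter.Tendsto (fun n : ℕ => w - (1 / 3 : ℝ) ^ n) Filter.atTop (nhds w) := by
      have := tendsto_pow_atTop_nhds_zero_of_lt_one (by norm_num : (0:ℝ) ≤ 1/3)
        (by norm_num : (1/3 : ℝ) < 1)
      simpa using tendsto_const_nhds.sub this
    exact tendsto_of_tendsto_of_tendsto_of_le_of_le h1n tendsto_const_nhds
      (fun n => (hbound n).1) (fun n => (hbound n).2)
  exact (tendsto_nhds_unique hs.hasSum.tendsto_sum_nat hlim).symm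

open MeasureTheory

def cantorDigits : Set ℝ := {x | ∃ c : ℕ → ℕ, (∀ i, c i = 0 ∨ c i = 2) ∧ x = cval c}

lemma cantor_subset (n : ℕ) : cantorDigits ⊆
    ⋃ p : Fin n → Bool,
      Set.Icc (∑ i : Fin n, (if p i then (2 : ℝ) else 0) / 3 ^ ((i : ℕ) + 1))
        ((∑ i : Fin n, (if p i then (2 : ℝ) else 0) / 3 ^ ((i : ℕ) + 1)) + (1 / 3) ^ n) := by
  classical
  rintro x ⟨c, hc, rfl⟩
  have hc2 : ∀ i, c i ≤ 2 := fun i => by rcases hc i with h | h <;> omega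
  refine Set.mem_iUnion.2 ⟨fun i => decide (c (i : ℕ) = 2), ?_⟩
  have hsum : ∑ i : Fin n, (if decide (c (i : ℕ) = 2) then (2 : ℝ) else 0) / 3 ^ ((i : ℕ) + 1)
      = ∑ i ∈ range n, (c i : ℝ) / 3 ^ (i + 1) := by
    rw [Finset.sum_range]
    refine Finset.sum_congr rfl fun i _ => ?_
    rcases hc i with h | h <;> simp [h]
  rw [hsum]
  have hsplit := cval_split hc2 n
  have hT0 : (0 : ℝ) ≤ cval (fun i => c (i + n)) := cval_nonneg
  have hT1 : cval (fun i => c (i + n)) ≤ 1 := cval_le_one fun i => hc2 _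
  have hE : (0 : ℝ) < 3 ^ n := by positivity
  have hp : (1 / 3 : ℝ) ^ n = 1 / 3 ^ n := by rw [div_pow, one_pow]
  constructor
  · rw [hsplit]
    have : 0 ≤ cval (fun i => c (i + n)) / 3 ^ n := div_nonneg hT0 hE.le
    linarith
  · rw [hsplit, hp]
    have : cval (fun i => c (i + n)) / 3 ^ n ≤ 1 / 3 ^ n := by gcongr
    linarith

lemma cantor_null : volume cantorDigits = 0 := by
  have hb : ∀ n : ℕ, volume cantorDigits ≤ ENNReal.ofReal ((2 / 3 : ℝ) ^ n) := by
    intro n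
    calc volume cantorDigits
        ≤ volume (⋃ p : Fin n → Bool,
            Set.Icc (∑ i : Fin n, (if p i then (2 : ℝ) else 0) / 3 ^ ((i : ℕ) + 1))
              ((∑ i : Fin n, (if p i then (2 : ℝ) else 0) / 3 ^ ((i : ℕ) + 1)) + (1 / 3) ^ n)) :=
          measure_mono (cantor_subset n)
      _ ≤ ∑' (_ : Fin n → Bool), ENNReal.ofReal ((1 / 3 : ℝ) ^ n) := by
          refine (measure_iUnion_le _).trans ?_
          refine ENNReal.tsum_le_tsum fun p => ?_
          rw [Real.volume_Icc]
          simp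
      _ = ENNReal.ofReal ((2 / 3 : ℝ) ^ n) := by
          rw [tsum_fintype, Finset.sum_const, nsmul_eq_mul]
          simp only [Finset.card_univ]
          rw [Fintype.card_fun]
          rw [show ((Fintype.card Bool ^ Fintype.card (Fin n) : ℕ) : ℝ≥0∞)
            = ENNReal.ofReal ((2 : ℝ) ^ n) by
              simp [ENNReal.ofReal_pow]]
          rw [← ENNReal.ofReal_mul (by positivity)]
          congr 1
          rw [← mul_pow]
          norm_num
  have hlim : Filter.Tendsto (fun n : ℕ => ENNReal.ofReal ((2 / 3 : ℝ) ^ n))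
      Filter.atTop (nhds 0) := by
    rw [← ENNReal.ofReal_zero]
    exact (ENNReal.continuous_ofReal.tendsto 0).comp
      (tendsto_pow_atTop_nhds_zero_of_lt_one (by norm_num) (by norm_num))
  exact le_antisymm (ge_of_tendsto' hlim hb) (zero_le)

def finOnes (k : ℕ) : Set ℝ :=
  {x | ∃ c : ℕ → ℕ, (∀ i, c i ≤ 2) ∧ (∀ i, k ≤ i → c i ≠ 1) ∧ x = cval c}

lemma finOnes_null (k : ℕ) : volume (finOnes k) = 0 := by
  classical
  have hsub : finOnes k ⊆ ⋃ p : Fin k → Fin 3,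
      ((∑ i : Fin k, ((p i : ℕ) : ℝ) / 3 ^ ((i : ℕ) + 1)) +ᵥ ((1 / 3 : ℝ) ^ k • cantorDigits)) := by
    rintro x ⟨c, hc2, hone, rfl⟩
    refine Set.mem_iUnion.2 ⟨fun i => ⟨c i, by have := hc2 (i : ℕ); omega⟩, ?_⟩
    have hsum : ∑ i : Fin k, (((⟨c (i : ℕ), by have := hc2 (i : ℕ); omega⟩ : Fin 3) : ℕ) : ℝ) / 3 ^ ((i : ℕ) + 1)
        = ∑ i ∈ range k, (c i : ℝ) / 3 ^ (i + 1) := by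
      rw [Finset.sum_range]
    have htail : cval (fun i => c (i + k)) ∈ cantorDigits := by
      refine ⟨fun i => c (i + k), fun i => ?_, rfl⟩
      have h1 := hc2 (i + k)
      have h2 := hone (i + k) (by omega)
      show c (i + k) = 0 ∨ c (i + k) = 2
      omega
    refine ⟨cval (fun i => c (i + k)) / 3 ^ k, ?_, ?_⟩
    · refine Set.mem_smul_set.2 ⟨cval (fun i => c (i + k)), htail, ?_⟩
      rw [smul_eq_mul]
      rw [div_pow, one_pow]
      ring
    · rw [hsum]
      simp only [vadd_eq_add]
      exact (cval_split hc2 k).symm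
  refine measure_mono_null hsub ?_
  refine measure_iUnion_null fun p => ?_
  rw [measure_vadd]
  rw [Measure.addHaar_smul]
  rw [cantor_null, mul_zero]

lemma mem_linCantor {c : ℕ → ℕ} (hc : ∀ i, c i = 0 ∨ c i = 2) :
    cval c ∈ linCantor 3 {0, 2} := by
  refine ⟨c, fun i => ?_, ?_⟩
  · rcases hc i with h | h <;> simp [h]
  · rw [cval]
    push_cast
    rfl

theorem good_card {z : ℝ} (c : ℕ → ℕ) (hc2 : ∀ i, c i ≤ 2) (hz : z = 2 * cval c)
    (hinf : {i | c i = 1}.Infinite) :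
    Cardinal.mk {p : ℝ × ℝ | p.1 ∈ linCantor 3 {0, 2} ∧ p.2 ∈ linCantor 3 {0, 2} ∧
      p.1 + p.2 = z} = Cardinal.continuum := by
  classical
  set S := {p : ℝ × ℝ | p.1 ∈ linCantor 3 {0, 2} ∧ p.2 ∈ linCantor 3 {0, 2} ∧
      p.1 + p.2 = z} with hS
  let a : (↥{i | c i = 1} → Bool) → ℕ → ℕ :=
    fun T i => if h : c i = 1 then (if T ⟨i, h⟩ then 2 else 0) else c i
  let b : (↥{i | c i = 1} → Bool) → ℕ → ℕ :=
    fun T i => if h : c i = 1 then (if T ⟨i, h⟩ then 0 else 2) else c i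
  have ha : ∀ T i, a T i = 0 ∨ a T i = 2 := by
    intro T i
    by_cases h : c i = 1
    · by_cases hT : T ⟨i, h⟩ <;> simp [a, h, hT]
    · have := hc2 i
      simp only [a, dif_neg h]
      omega
  have hb : ∀ T i, b T i = 0 ∨ b T i = 2 := by
    intro T i
    by_cases h : c i = 1
    · by_cases hT : T ⟨i, h⟩ <;> simp [b, h, hT]
    · have := hc2 i
      simp only [b, dif_neg h]
      omega
  have hab : ∀ T i, a T i + b T i = 2 * c i := by
    intro T i
    by_cases h : c i = 1
    · by_cases hT : T ⟨i, h⟩ <;> simp [a, b, h, hT] <;> omega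
    · simp only [a, b, dif_neg h]
      omega
  have hmem : ∀ T, (cval (a T), cval (b T)) ∈ S := by
    intro T
    refine ⟨mem_linCantor (ha T), mem_linCantor (hb T), ?_⟩
    have ha2 : ∀ i, a T i ≤ 2 := fun i => by rcases ha T i with h | h <;> omega
    have hb2 : ∀ i, b T i ≤ 2 := fun i => by rcases hb T i with h | h <;> omega
    show cval (a T) + cval (b T) = z
    calc cval (a T) + cval (b T) = cval (fun i => a T i + b T i) := (cval_add ha2 hb2).symm
      _ = cval (fun i => 2 * c i) := by
          congr 1
          funext i
          rw [hab]
      _ = 2 * cval c := cval_two_mul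
      _ = z := hz.symm
  have hinj : Function.Injective
      (fun T : ↥{i | c i = 1} → Bool => (⟨(cval (a T), cval (b T)), hmem T⟩ : S)) := by
    intro T T' hEq
    have h1 : cval (a T) = cval (a T') := by
      have := congrArg (fun p : S => (p : ℝ × ℝ).1) hEq
      simpa using this
    have h2 : a T = a T' := cval_inj (ha T) (ha T') h1
    funext j
    obtain ⟨i, h⟩ := j
    have h3 := congrFun h2 i
    simp only [a, dif_pos h] at h3
    by_cases hT : T ⟨i, h⟩ <;> by_cases hT' : T' ⟨i, h⟩ <;>
      simp [hT, hT', show c i = 1 from h] at h3 ⊢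
  have hsub : Infinite ↥{i | c i = 1} := hinf.to_subtype
  have hc1 : Cardinal.mk ↥{i | c i = 1} = Cardinal.aleph0 := Cardinal.mk_eq_aleph0 _
  have hcard : Cardinal.mk (↥{i | c i = 1} → Bool) = Cardinal.continuum := by
    rw [← Cardinal.power_def, Cardinal.mk_bool, hc1, Cardinal.two_power_aleph0]
  refine le_antisymm ?_ ?_
  · calc Cardinal.mk S ≤ Cardinal.mk (ℝ × ℝ) := Cardinal.mk_set_le _
      _ = Cardinal.continuum := by
          rw [Cardinal.mk_prod, Cardinal.mk_real, Cardinal.lift_id,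
            Cardinal.continuum_mul_self]
  · rw [← hcard]
    exact Cardinal.mk_le_of_injective hinj

/-- For a.e. `z ∈ [0,2]`, the set of pairs `(x,y) ∈ C × C` with `x + y = z` has
cardinality of the continuum, where `C` is the middle-third Cantor set. -/
theorem ae_continuum_representations :
    ∀ᵐ z ∂(MeasureTheory.volume.restrict (Set.Icc (0 : ℝ) 2)),
      Cardinal.mk {p : ℝ × ℝ | p.1 ∈ linCantor 3 {0, 2} ∧ p.2 ∈ linCantor 3 {0, 2} ∧
        p.1 + p.2 = z} = Cardinal.continuum := by
  have hnull : volume ((2 : ℝ) • ⋃ k, finOnes k) = 0 := by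
    rw [Measure.addHaar_smul, measure_iUnion_null finOnes_null, mul_zero]
  rw [ae_restrict_iff' measurableSet_Icc, ae_iff]
  refine measure_mono_null ?_ hnull
  intro z hz
  simp only [Set.mem_setOf_eq] at hz
  push_neg at hz
  obtain ⟨⟨h0, h2⟩, hzc⟩ := hz
  obtain ⟨c, hc2, hcw⟩ := exists_expansion (w := z / 2) (by linarith) (by linarith)
  by_cases hinf : {i | c i = 1}.Infinite
  · exact absurd (good_card c hc2 (by linarith [hcw]) hinf) hzc
  · have hfin := Set.not_infinite.1 hinf
    obtain ⟨k, hk⟩ := hfin.bddAbove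
    refine Set.mem_smul_set.2 ⟨z / 2,
      Set.mem_iUnion.2 ⟨k + 1, c, hc2, ?_, hcw⟩, by rw [smul_eq_mul]; ring⟩
    intro i hi h1
    exact absurd (hk (show i ∈ {i | c i = 1} from h1)) (by omega)
end

section
/- Let n ≥ 2 and A ⊆ {0,1,...,n-1} with 0, n-1 ∈ A. If #A < √n, then C_{A,n} + C_{A,n} ≠ [0,2]. -/
open Pointwise

lemma digit_summable (n : ℕ) (hn : 2 ≤ n) (a : ℕ → ℕ) (ha : ∀ i, a i < n) :
    Summable (fun i => (a i : ℝ) / n ^ (i + 1)) := by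
  have hn0 : (0:ℝ) < n := by positivity
  have hge : (2:ℝ) ≤ n := by exact_mod_cast hn
  have hgeo : Summable (fun i : ℕ => (1/(n:ℝ))^i) := by
    apply summable_geometric_of_lt_one (by positivity)
    rw [div_lt_one hn0]; linarith
  apply hgeo.of_nonneg_of_le (fun i => by positivity)
  intro i
  have hai : (a i : ℝ) ≤ n := le_of_lt (by exact_mod_cast ha i)
  have h1 : (a i : ℝ) / n ^ (i+1) ≤ (n : ℝ) / n ^ (i+1) := by gcongr
  refine h1.trans (le_of_eq ?_)
  rw [div_pow, one_pow, pow_succ]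
  field_simp

lemma tail_bound (n : ℕ) (hn : 2 ≤ n) (d : ℕ → ℕ) (hdlt : ∀ i, d i < n) :
    ∑' i : ℕ, ((d (i+1) : ℝ) / n ^ (i+1+1)) ≤ 1 / n := by
  have hn0 : (0:ℝ) < n := by positivity
  have hge : (2:ℝ) ≤ n := by exact_mod_cast hn
  set g : ℕ → ℝ := fun i => (((n:ℝ) - 1) / n ^ 2) * (1/n)^i with hg
  have hgeo : Summable (fun i : ℕ => (1/(n:ℝ))^i) := by
    apply summable_geometric_of_lt_one (by positivity)
    rw [div_lt_one hn0]; linarith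
  have hb : Summable g := hgeo.mul_left _
  have hle : ∀ i : ℕ, (d (i+1) : ℝ) / n ^ (i+1+1) ≤ g i := by
    intro i
    have hd1 : (d (i+1) : ℝ) ≤ (n:ℝ) - 1 := by
      have : ((d (i+1) : ℝ)) + 1 ≤ n := by exact_mod_cast hdlt (i+1)
      linarith
    calc (d (i+1) : ℝ) / n ^ (i+1+1) ≤ ((n:ℝ) - 1) / n ^ (i+1+1) := by gcongr
      _ = g i := by
          show _ = (((n:ℝ) - 1) / n ^ 2) * (1/(n:ℝ))^i
          rw [div_pow, one_pow, div_mul_div_comm, mul_one, ← pow_add,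
            show 2 + i = i + 1 + 1 from by omega]
  have hs : Summable (fun i => (d (i+1) : ℝ) / n ^ (i+1+1)) :=
    Summable.of_nonneg_of_le (fun i => by positivity) hle hb
  calc ∑' i : ℕ, ((d (i+1) : ℝ) / n ^ (i+1+1)) ≤ ∑' i, g i := Summable.tsum_le_tsum hle hs hb
    _ = (((n:ℝ) - 1) / n ^ 2) * ∑' i : ℕ, (1/(n:ℝ))^i := tsum_mul_left
    _ = (((n:ℝ) - 1) / n ^ 2) * (1 - 1/(n:ℝ))⁻¹ := by
        rw [tsum_geometric_of_lt_one (by positivity) (by rw [div_lt_one hn0]; linarith)]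
    _ = 1 / n := by
        have hne : (n:ℝ) - 1 ≠ 0 := by linarith
        have h2 : (1:ℝ) - 1/n = ((n:ℝ)-1)/n := by field_simp
        rw [h2, inv_div]
        field_simp

lemma cover_step (n : ℕ) (hn : 2 ≤ n) (A : Finset ℕ) (hA : ∀ a ∈ A, a < n)
    (x : ℝ) (hx : x ∈ linCantor n ↑A) :
    ∃ a ∈ A, x ∈ Set.Icc ((a : ℝ)/n) ((a+1)/n) := by
  obtain ⟨d, hd, rfl⟩ := hx
  have hdlt : ∀ i, d i < n := fun i => hA _ (hd i)
  have hsum := digit_summable n hn d hdlt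
  have hn0 : (0:ℝ) < n := by positivity
  refine ⟨d 0, hd 0, ?_, ?_⟩
  · have := Summable.le_tsum hsum 0 (fun i _ => by positivity)
    simpa using this
  · rw [Summable.tsum_eq_zero_add hsum]
    have htail := tail_bound n hn d hdlt
    calc (d 0 : ℝ) / n ^ (0+1) + ∑' i : ℕ, ((d (i+1) : ℝ) / n ^ (i+1+1))
        ≤ (d 0 : ℝ) / n ^ (0+1) + 1/n := by linarith
      _ = ((d 0 : ℝ) + 1) / n := by rw [pow_one]; ring

/-- If `#A < √n` then `A` is not `n`-good. -/
theorem not_good_of_card_lt_sqrt (n : ℕ) (hn : 2 ≤ n) (A : Finset ℕ)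
    (h0 : 0 ∈ A) (htop : n - 1 ∈ A) (hA : ∀ a ∈ A, a < n)
    (hcard : (A.card : ℝ) < Real.sqrt n) :
    linCantor n ↑A + linCantor n ↑A ≠ Set.Icc (0 : ℝ) 2 := by
  intro heq
  have hn0 : (0:ℝ) < n := by positivity
  have hcardsq : (A.card : ℝ) * A.card < n := by
    have h1 : (A.card : ℝ) * A.card < Real.sqrt n * Real.sqrt n :=
      mul_self_lt_mul_self (by positivity) hcard
    rwa [Real.mul_self_sqrt (le_of_lt hn0)] at h1
  have hcov : linCantor n ↑A + linCantor n ↑A ⊆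
      ⋃ p ∈ (A ×ˢ A : Finset (ℕ × ℕ)),
        Set.Icc (((p.1 : ℝ) + p.2)/n) (((p.1 : ℝ) + p.2 + 2)/n) := by
    rintro z ⟨x, hx, y, hy, rfl⟩
    obtain ⟨a, haA, hax⟩ := cover_step n hn A hA x hx
    obtain ⟨b, hbA, hby⟩ := cover_step n hn A hA y hy
    refine Set.mem_biUnion (Finset.mk_mem_product haA hbA) ?_
    constructor
    · calc ((a:ℝ) + b)/n = (a:ℝ)/n + (b:ℝ)/n := by ring
        _ ≤ x + y := add_le_add hax.1 hby.1
    · calc x + y ≤ ((a:ℝ)+1)/n + ((b:ℝ)+1)/n := add_le_add hax.2 hby.2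
        _ = ((a:ℝ) + b + 2)/n := by ring
  have hvol : MeasureTheory.volume (linCantor n ↑A + linCantor n ↑A) ≤
      (A.card * A.card : ℕ) * ENNReal.ofReal (2/n) := by
    refine (MeasureTheory.measure_mono hcov).trans ?_
    refine (MeasureTheory.measure_biUnion_finset_le _ _).trans ?_
    have hIcc : ∀ p ∈ (A ×ˢ A : Finset (ℕ × ℕ)),
        MeasureTheory.volume (Set.Icc (((p.1 : ℝ) + p.2)/n) (((p.1 : ℝ) + p.2 + 2)/n)) =
        ENNReal.ofReal (2/n) := by
      intro p _
      rw [Real.volume_Icc]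
      congr 1
      field_simp
      ring
    rw [Finset.sum_congr rfl hIcc, Finset.sum_const, Finset.card_product]
    simp [nsmul_eq_mul]
  rw [heq, Real.volume_Icc] at hvol
  have hlt : ((A.card * A.card : ℕ) : ENNReal) * ENNReal.ofReal (2/n) <
      ENNReal.ofReal (2 - 0) := by
    calc ((A.card * A.card : ℕ) : ENNReal) * ENNReal.ofReal (2/n)
        = ENNReal.ofReal (((A.card * A.card : ℕ) : ℝ) * (2/n)) := by
          rw [ENNReal.ofReal_mul (by positivity), ENNReal.ofReal_natCast]
      _ < ENNReal.ofReal (2 - 0) := by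
          rw [ENNReal.ofReal_lt_ofReal_iff (by norm_num)]
          have h2 : ((A.card * A.card : ℕ) : ℝ) * (2/n) < 2 := by
            rw [mul_div_assoc', div_lt_iff₀ hn0]
            push_cast
            nlinarith [hcardsq]
          linarith
  exact absurd hvol (not_le.mpr hlt)
end

section
/- Let n ≥ 4 and A ⊆ {0,1,...,n-1} with 0, n-1 ∈ A, A n-good, and 1 ∉ A, n-2 ∉ A. Then dim_H(U_A) ≥ log 2 / log n > 0. -/
open MeasureTheory Pointwise
open scoped NNReal ENNReal

lemma summable_digSum {N B : ℝ} (hN : 2 ≤ N) {d : ℕ → ℝ} (hd : ∀ i, |d i| ≤ B) :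
    Summable (fun i => d i / N ^ (i + 1)) := by
  have h1 : (0:ℝ) < N := lt_of_lt_of_le two_pos hN
  have hr0 : (0:ℝ) ≤ 1 / N := by positivity
  have hr : (1:ℝ) / N < 1 := by rw [div_lt_one h1]; linarith
  have hgeo : Summable (fun i : ℕ => (B/N) * (1/N)^i) :=
    (summable_geometric_of_lt_one hr0 hr).mul_left _
  refine Summable.of_norm_bounded hgeo ?_
  intro i
  have hp : (0:ℝ) < N ^ (i+1) := by positivity
  have : ‖d i / N ^ (i+1)‖ = |d i| / N ^ (i+1) := by
    rw [Real.norm_eq_abs, abs_div, abs_of_pos hp]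
  rw [this]
  have h2 : |d i| / N ^ (i+1) ≤ B / N ^ (i+1) := div_le_div_of_nonneg_right (hd i) hp.le
  calc |d i| / N ^ (i+1) ≤ B / N ^ (i+1) := h2
    _ = B/N * (1/N)^i := by rw [div_pow, one_pow, div_mul_div_comm, mul_one, pow_succ, mul_comm]

lemma tsum_geomN {N : ℝ} (hN : 2 ≤ N) : ∑' i : ℕ, (1:ℝ) / N ^ (i+1) = 1 / (N - 1) := by
  have h1 : (0:ℝ) < N := lt_of_lt_of_le two_pos hN
  have hr0 : (0:ℝ) ≤ 1 / N := by positivity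
  have hr : (1:ℝ) / N < 1 := by rw [div_lt_one h1]; linarith
  have h := tsum_geometric_of_lt_one hr0 hr
  have h2 : ∑' i : ℕ, (1:ℝ)/N ^ (i+1) = ∑' i : ℕ, (1/N) * (1/N)^i := by
    apply tsum_congr; intro i; rw [pow_succ]; field_simp; rw [← mul_pow, mul_one_div_cancel h1.ne', one_pow]
  rw [h2, tsum_mul_left, h]
  rw [eq_comm]
  field_simp

lemma tsum_const_divN {N B : ℝ} (hN : 2 ≤ N) : ∑' i : ℕ, B / N ^ (i+1) = B / (N - 1) := by
  have h2 : ∀ i : ℕ, B / N ^ (i+1) = B * (1 / N ^ (i+1)) := by intro i; ring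
  rw [tsum_congr h2, tsum_mul_left, tsum_geomN hN]
  ring

lemma abs_digSum_le {N B : ℝ} (hN : 2 ≤ N) {d : ℕ → ℝ} (hd : ∀ i, |d i| ≤ B) :
    |∑' i, d i / N ^ (i+1)| ≤ B / (N - 1) := by
  have hs := summable_digSum hN hd
  calc |∑' i, d i / N^(i+1)| ≤ ∑' i, |d i / N^(i+1)| := by
        simpa only [Real.norm_eq_abs] using norm_tsum_le_tsum_norm (f := fun i => d i / N^(i+1)) (by simpa only [Real.norm_eq_abs] using hs.abs)
    _ ≤ ∑' i : ℕ, B / N^(i+1) := by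
        refine Summable.tsum_le_tsum ?_ hs.abs ?_
        · intro i
          have hp : (0:ℝ) < N ^ (i+1) := by positivity
          rw [abs_div, abs_of_pos hp]
          exact div_le_div_of_nonneg_right (hd i) hp.le
        · exact summable_digSum hN (d := fun _ => B)
            (fun i => by rw [abs_of_nonneg (le_trans (abs_nonneg _) (hd 0))])
    _ = B / (N-1) := tsum_const_divN hN

lemma digSum_le_sub {N B : ℝ} (hN : 2 ≤ N) {d : ℕ → ℝ} (hd : ∀ i, |d i| ≤ B) (k : ℕ)
    (hk : d k ≤ B - 1) : ∑' i, d i / N ^ (i+1) ≤ B / (N-1) - 1 / N ^ (k+1) := by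
  have hs := summable_digSum hN hd
  have hB : 0 ≤ B := le_trans (abs_nonneg _) (hd 0)
  have hsB : Summable (fun i : ℕ => B / N ^ (i+1)) :=
    summable_digSum hN (d := fun _ => B) (fun i => by rw [abs_of_nonneg hB])
  have hsI : Summable (fun i : ℕ => (if i = k then (1:ℝ) else 0) / N ^ (i+1)) :=
    summable_digSum hN (B := 1) (d := fun i => if i = k then (1:ℝ) else 0)
      (fun i => by by_cases h : i = k <;> simp [h])
  have hle : ∀ i, d i / N ^ (i+1) ≤ B / N^(i+1) - (if i = k then (1:ℝ) else 0) / N^(i+1) := by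
    intro i
    have hp : (0:ℝ) < N ^ (i+1) := by positivity
    rw [div_sub_div_same]
    apply div_le_div_of_nonneg_right _ hp.le
    split
    · next h => subst h; linarith
    · have := (abs_le.mp (hd i)).2; linarith
  calc ∑' i, d i / N^(i+1)
      ≤ ∑' i, (B / N^(i+1) - (if i = k then (1:ℝ) else 0) / N^(i+1)) :=
        Summable.tsum_le_tsum hle hs (hsB.sub hsI)
    _ = (∑' i : ℕ, B / N^(i+1)) - ∑' i : ℕ, (if i = k then (1:ℝ) else 0) / N^(i+1) :=
        Summable.tsum_sub hsB hsI
    _ = B/(N-1) - 1/N^(k+1) := by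
        rw [tsum_const_divN hN]
        congr 1
        have : ∀ i : ℕ, (if i = k then (1:ℝ) else 0) / N^(i+1)
            = (if i = k then (1:ℝ)/N^(k+1) else 0) := by
          intro i; split
          · next h => subst h; rfl
          · simp
        rw [tsum_congr this, tsum_ite_eq]

lemma digSum_split {N B : ℝ} (hN : 2 ≤ N) {d : ℕ → ℝ} (hd : ∀ i, |d i| ≤ B) (j : ℕ)
    (hpre : ∀ i < j, d i = 0) :
    ∑' i, d i / N ^ (i+1)
      = d j / N ^ (j+1) + (1 / N ^ (j+1)) * ∑' i, d (j+1+i) / N ^ (i+1) := by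
  have hs := summable_digSum hN hd
  have h0 : (0:ℝ) < N := lt_of_lt_of_le two_pos hN
  rw [← Summable.sum_add_tsum_nat_add (j+1) hs]
  congr 1
  · rw [Finset.sum_eq_single j]
    · intro i hi hne
      rw [hpre i (lt_of_le_of_ne (Nat.lt_succ_iff.mp (Finset.mem_range.mp hi)) hne), zero_div]
    · intro h; exact absurd (Finset.self_mem_range_succ j) h
  · rw [← tsum_mul_left]
    apply tsum_congr
    intro i
    have : d (i + (j+1)) = d (j+1+i) := by rw [add_comm]
    rw [this]
    rw [show i + (j+1) + 1 = (j+1) + (i+1) by ring, pow_add]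
    field_simp

lemma digSum_diff_eq {N B : ℝ} (hN : 2 ≤ N) {d : ℕ → ℝ} (hd : ∀ i, |d i| ≤ B) (j : ℕ)
    (hpre : ∀ i < j, d i = 0) (h0 : ∑' i, d i / N ^ (i+1) = 0) :
    d j = - ∑' i, d (j+1+i) / N ^ (i+1) := by
  have h := digSum_split hN hd j hpre
  rw [h0] at h
  have hp : (0:ℝ) < N ^ (j+1) := by positivity
  have hp' : N ^ (j+1) ≠ 0 := ne_of_gt hp
  field_simp at h
  linarith

lemma digits_eq {n : ℕ} (hn : 4 ≤ n) (s c : ℕ → ℕ)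
    (hs : ∀ i, s i ≤ 2*n-2) (hs1 : ∀ i, s i ≠ 1) (hs3 : ∀ i, s i ≠ 2*n-3)
    (hc : ∀ i, c i = 0 ∨ c i = 2*n-2)
    (hiT : ∀ j, ∃ k, c (j+1+k) = 2*n-2) (hiF : ∀ j, ∃ k, c (j+1+k) = 0)
    (heq : ∑' i, (s i : ℝ)/(n:ℝ)^(i+1) = ∑' i, (c i : ℝ)/(n:ℝ)^(i+1)) :
    ∀ i, s i = c i := by
  have hN : (2:ℝ) ≤ (n:ℝ) := by
    have : (4:ℝ) ≤ (n:ℝ) := by exact_mod_cast hn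
    linarith
  have hNgt : (2:ℝ) < (n:ℝ) := by
    have : (4:ℝ) ≤ (n:ℝ) := by exact_mod_cast hn
    linarith
  set N := (n:ℝ) with hNdef
  set B : ℝ := 2*N - 2 with hBdef
  have hBdiv : B / (N - 1) = 2 := by
    have h1 : N - 1 ≠ 0 := by rw [hNdef]; linarith
    rw [hBdef, div_eq_iff h1]; ring
  have h2n : ((2*n-2:ℕ):ℝ) = B := by
    have h : 2 ≤ 2*n := by omega
    rw [hBdef, hNdef]; push_cast [h]; ring
  set d : ℕ → ℝ := fun i => (s i : ℝ) - c i with hdd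
  have hcle : ∀ i, c i ≤ 2*n-2 := fun i => by rcases hc i with h|h <;> omega
  have hB : ∀ i, |d i| ≤ B := by
    intro i
    have h1 : (s i : ℝ) ≤ B := by rw [← h2n]; exact_mod_cast hs i
    have h2 : (c i : ℝ) ≤ B := by rw [← h2n]; exact_mod_cast hcle i
    have h3 : (0:ℝ) ≤ (s i : ℝ) := Nat.cast_nonneg _
    have h4 : (0:ℝ) ≤ (c i : ℝ) := Nat.cast_nonneg _
    have hdfn : d i = (s i:ℝ) - (c i:ℝ) := rfl
    rw [hdfn, abs_le]; constructor <;> linarith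
  have hsum0 : ∑' i, d i / N ^ (i+1) = 0 := by
    have hss : Summable (fun i => (s i : ℝ) / N ^ (i+1)) := by
      apply summable_digSum hN (B := B)
      intro i
      rw [abs_of_nonneg (Nat.cast_nonneg _)]
      rw [← h2n]; exact_mod_cast hs i
    have hsc : Summable (fun i => (c i : ℝ) / N ^ (i+1)) := by
      apply summable_digSum hN (B := B)
      intro i
      rw [abs_of_nonneg (Nat.cast_nonneg _)]
      rw [← h2n]; exact_mod_cast hcle i
    have : ∀ i, d i / N ^ (i+1) = (s i : ℝ)/N^(i+1) - (c i : ℝ)/N^(i+1) := by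
      intro i; rw [hdd]; ring
    rw [tsum_congr this, Summable.tsum_sub hss hsc, heq, sub_self]
  intro i
  induction i using Nat.strong_induction_on with
  | _ j IH =>
  by_contra hne
  have hpre : ∀ i < j, d i = 0 := by
    intro i hi; rw [hdd]; simp [IH i hi]
  have hdj : d j = - ∑' i, d (j+1+i) / N^(i+1) := digSum_diff_eq hN hB j hpre hsum0
  have htb : ∀ i, |d (j+1+i)| ≤ B := fun i => hB _
  have habs : |d j| ≤ 2 := by
    rw [hdj, abs_neg, ← hBdiv]
    exact abs_digSum_le hN htb
  have hBm1 : (0:ℝ) ≤ B - 1 := by rw [hBdef]; linarith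
  rcases hc j with h0c | h2c
  · -- c j = 0
    have hsR : (s j : ℝ) ≤ 2 := by
      have := (abs_le.mp habs).2
      rw [hdd] at this; simp only [h0c] at this; push_cast at this; linarith
    have hsj2 : s j ≤ 2 := by exact_mod_cast hsR
    have hsjv : s j = 2 := by
      have := hs1 j; have h0 : s j ≠ 0 := fun h => hne (by rw [h, h0c]); omega
    have hdjv : d j = 2 := by rw [hdd]; simp [hsjv, h0c]
    obtain ⟨k, hk⟩ := hiF j
    have hkd : - d (j+1+k) ≤ B - 1 := by
      rw [hdd]; simp only [hk]
      push_cast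
      have : (0:ℝ) ≤ (s (j+1+k) : ℝ) := Nat.cast_nonneg _
      linarith
    have hbound : ∑' i, (- d (j+1+i)) / N^(i+1) ≤ B/(N-1) - 1/N^(k+1) :=
      digSum_le_sub hN (d := fun i => - d (j+1+i)) (fun i => by rw [abs_neg]; exact htb i) k hkd
    have hval : ∑' i, (- d (j+1+i)) / N^(i+1) = 2 := by
      have : ∀ i, (- d (j+1+i)) / N^(i+1) = - (d (j+1+i) / N^(i+1)) := fun i => by ring
      rw [tsum_congr this, tsum_neg, ← hdj, hdjv]
    rw [hval, hBdiv] at hbound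
    have : (0:ℝ) < 1/N^(k+1) := by positivity
    linarith
  · -- c j = 2*n-2
    have hcR : (c j : ℝ) = B := by rw [h2c, h2n]
    have hsR : B - 2 ≤ (s j : ℝ) := by
      have := (abs_le.mp habs).1
      have hdfn : d j = (s j:ℝ) - (c j:ℝ) := rfl
      rw [hdfn] at this; linarith [hcR]
    have hs4 : 2*n-4 ≤ s j := by
      have : ((2*n-4:ℕ):ℝ) ≤ (s j :ℝ) := by
        have h4 : 4 ≤ 2*n := by omega
        push_cast [h4]
        rw [hBdef, hNdef] at hsR; linarith
      exact_mod_cast this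
    have hsjv : s j = 2*n-4 := by
      have := hs j; have := hs3 j
      have h0 : s j ≠ 2*n-2 := fun h => hne (by rw [h, h2c])
      omega
    have hdjv : d j = -2 := by
      have hdfn : d j = (s j:ℝ) - (c j:ℝ) := rfl
      have h24 : ((2*n-4:ℕ):ℝ) = B - 2 := by
        have h4 : 4 ≤ 2*n := by omega
        rw [hBdef, hNdef]; push_cast [h4]; ring
      rw [hdfn, hsjv, h24, hcR]; ring
    obtain ⟨k, hk⟩ := hiT j
    have hkd : d (j+1+k) ≤ B - 1 := by
      rw [hdd]; simp only [hk, h2n]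
      have h1 : (s (j+1+k) : ℝ) ≤ B := by rw [← h2n]; exact_mod_cast hs _
      linarith
    have hbound : ∑' i, d (j+1+i) / N^(i+1) ≤ B/(N-1) - 1/N^(k+1) :=
      digSum_le_sub hN (d := fun i => d (j+1+i)) htb k hkd
    have hval : ∑' i, d (j+1+i) / N^(i+1) = 2 := by
      have := hdj; rw [hdjv] at this; linarith
    rw [hval, hBdiv] at hbound
    have : (0:ℝ) < 1/N^(k+1) := by positivity
    linarith

lemma digSum_diff_bounds {N B : ℝ} (hN : 2 ≤ N) {d : ℕ → ℝ} (hd : ∀ i, |d i| ≤ B) (j : ℕ)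
    (hpre : ∀ i < j, d i = 0) :
    |∑' i, d i / N^(i+1)| ≤ (|d j| + B/(N-1))/N^(j+1) ∧
    (|d j| - B/(N-1))/N^(j+1) ≤ |∑' i, d i / N^(i+1)| := by
  have hsplit := digSum_split hN hd j hpre
  have hT : |∑' i, d (j+1+i) / N^(i+1)| ≤ B/(N-1) :=
    abs_digSum_le hN (fun i => hd _)
  have hp : (0:ℝ) < N ^ (j+1) := by positivity
  set T := ∑' i, d (j+1+i) / N^(i+1)
  have heq : ∑' i, d i / N^(i+1) = (d j + T)/N^(j+1) := by
    rw [hsplit]; field_simp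
  rw [heq, abs_div, abs_of_pos hp]
  constructor
  · apply div_le_div_of_nonneg_right _ hp.le
    calc |d j + T| ≤ |d j| + |T| := abs_add_le _ _
      _ ≤ |d j| + B/(N-1) := by linarith
  · apply div_le_div_of_nonneg_right _ hp.le
    have := abs_sub_abs_le_abs_sub (d j) (-T)
    rw [sub_neg_eq_add, abs_neg] at this
    linarith

noncomputable def tauB (b : ℕ → Bool) : ℝ := ∑' i, (if b i then (1:ℝ) else 0)/2^(i+1)

lemma tauB_bound (b b' : ℕ → Bool) (j : ℕ) (hpre : ∀ i < j, b i = b' i) :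
    |tauB b - tauB b'| ≤ 2/2^(j+1) := by
  set d : ℕ → ℝ := fun i => (if b i then (1:ℝ) else 0) - (if b' i then (1:ℝ) else 0) with hd
  have hB : ∀ i, |d i| ≤ 1 := by
    intro i
    have : d i = (if b i then (1:ℝ) else 0) - (if b' i then (1:ℝ) else 0) := rfl
    rw [this]; rcases Bool.dichotomy (b i) with h|h <;> rcases Bool.dichotomy (b' i) with h'|h' <;>
      simp [h, h']
  have hsub : tauB b - tauB b' = ∑' i, d i / 2^(i+1) := by
    rw [tauB, tauB, ← Summable.tsum_sub (summable_digSum le_rfl (B := 1) (fun i => by split <;> simp))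
      (summable_digSum le_rfl (B := 1) (fun i => by split <;> simp))]
    apply tsum_congr; intro i
    have : d i = (if b i then (1:ℝ) else 0) - (if b' i then (1:ℝ) else 0) := rfl
    rw [this]; ring
  have hpre' : ∀ i < j, d i = 0 := by
    intro i hi
    have : d i = (if b i then (1:ℝ) else 0) - (if b' i then (1:ℝ) else 0) := rfl
    rw [this, hpre i hi, sub_self]
  have := (digSum_diff_bounds le_rfl hB j hpre').1
  rw [hsub]
  refine le_trans this ?_
  apply div_le_div_of_nonneg_right _ (by positivity)
  have := hB j
  norm_num
  linarith

noncomputable def brem (x : ℝ) : ℕ → ℝ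
  | 0 => x
  | (k+1) => 2 * brem x k - (if (1:ℝ) ≤ 2 * brem x k then 1 else 0)

noncomputable def bdig (x : ℝ) (k : ℕ) : Bool := decide ((1:ℝ) ≤ 2 * brem x k)

lemma brem_succ (x : ℝ) (k : ℕ) :
    brem x (k+1) = 2 * brem x k - (if bdig x k then (1:ℝ) else 0) := by
  rw [brem, bdig]
  by_cases h : (1:ℝ) ≤ 2 * brem x k <;> simp [h]

lemma brem_mem {x : ℝ} (hx : x ∈ Set.Ico (0:ℝ) 1) (k : ℕ) : brem x k ∈ Set.Ico (0:ℝ) 1 := by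
  induction k with
  | zero => exact hx
  | succ k ih =>
    obtain ⟨h0, h1⟩ := ih
    rw [Set.mem_Ico]
    constructor <;>
      (rw [brem_succ, bdig]; by_cases h : (1:ℝ) ≤ 2 * brem x k <;> simp [h] <;> linarith)

lemma brem_partial {x : ℝ} (k : ℕ) :
    x = (∑ i ∈ Finset.range k, (if bdig x i then (1:ℝ) else 0)/2^(i+1)) + brem x k / 2^k := by
  induction k with
  | zero => simp [brem]
  | succ k ih =>
    rw [Finset.sum_range_succ, brem_succ]
    conv_lhs => rw [ih]
    generalize (if bdig x k then (1:ℝ) else 0) = t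
    ring

lemma tauB_bdig {x : ℝ} (hx : x ∈ Set.Ico (0:ℝ) 1) : tauB (bdig x) = x := by
  have hsum : Summable (fun i => (if bdig x i then (1:ℝ) else 0)/2^(i+1)) :=
    summable_digSum le_rfl (B := 1) (fun i => by split <;> simp)
  have h1 := hsum.hasSum.tendsto_sum_nat
  have h2 : Filter.Tendsto (fun k => ∑ i ∈ Finset.range k, (if bdig x i then (1:ℝ) else 0)/2^(i+1))
      Filter.atTop (nhds x) := by
    have hb : ∀ k : ℕ, ∑ i ∈ Finset.range k, (if bdig x i then (1:ℝ) else 0)/2^(i+1)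
        = x - brem x k / 2^k := by
      intro k; have := brem_partial (x := x) k; linarith
    simp only [hb]
    have hhalf : Filter.Tendsto (fun k : ℕ => (1:ℝ)/2^k) Filter.atTop (nhds 0) := by
      have h := tendsto_pow_atTop_nhds_zero_of_lt_one
        (by norm_num : (0:ℝ) ≤ 1/2) (by norm_num : (1:ℝ)/2 < 1)
      refine h.congr (fun k => ?_)
      rw [div_pow, one_pow]
    have hz : Filter.Tendsto (fun k : ℕ => brem x k / 2^k) Filter.atTop (nhds 0) := by
      refine squeeze_zero (fun k => div_nonneg (brem_mem hx k).1 (by positivity))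
        (fun k => ?_) hhalf
      have hp : (0:ℝ) < 2^k := by positivity
      exact div_le_div_of_nonneg_right (le_of_lt (brem_mem hx k).2) hp.le
    simpa using Filter.Tendsto.sub (tendsto_const_nhds (x := x)) hz
  exact tendsto_nhds_unique h1 h2

lemma brem_rat (x : ℝ) : ∀ k, ∃ q : ℚ, brem x k = 2^k * x - q := by
  intro k; induction k with
  | zero => exact ⟨0, by simp [brem]⟩
  | succ k ih =>
    obtain ⟨q, hq⟩ := ih
    refine ⟨2*q + (if bdig x k then 1 else 0), ?_⟩
    rw [brem_succ, hq]
    by_cases h : bdig x k <;> simp [h] <;> push_cast <;> ring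

lemma brem_ne_zero {x : ℝ} (hx : x ∉ Set.range ((↑) : ℚ → ℝ)) (k : ℕ) : brem x k ≠ 0 := by
  intro h0
  obtain ⟨q, hq⟩ := brem_rat x k
  rw [h0] at hq
  apply hx
  refine ⟨q / 2^k, ?_⟩
  push_cast
  have h2 : (2:ℝ)^k ≠ 0 := by positivity
  field_simp
  linarith

lemma bdig_exists_false {x : ℝ} (hx : x ∈ Set.Ico (0:ℝ) 1) (j : ℕ) :
    ∃ k, bdig x (j+1+k) = false := by
  by_contra h
  push_neg at h
  simp only [Bool.not_eq_false] at h
  set c : ℝ := 1 - brem x (j+1) with hc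
  have hcpos : 0 < c := by
    have := (brem_mem hx (j+1)).2; rw [hc]; linarith
  have hgrow : ∀ k, 2^k * c ≤ 1 - brem x (j+1+k) := by
    intro k; induction k with
    | zero => simp [hc]
    | succ k ih =>
      have hstep : brem x (j+1+(k+1)) = 2 * brem x (j+1+k) - 1 := by
        rw [show j+1+(k+1) = (j+1+k)+1 by ring, brem_succ, h k]
        simp
      rw [hstep]
      have : (2:ℝ)^(k+1) * c = 2 * (2^k * c) := by ring
      rw [this]
      linarith
  obtain ⟨m, hm⟩ := exists_nat_gt (1/c)
  have h2m : (1:ℝ)/c < 2^m := by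
    have := Nat.lt_two_pow_self (n := m)
    have h2 : (m:ℝ) < 2^m := by exact_mod_cast this
    linarith
  have hlt : 1 < 2^m * c := by
    rw [div_lt_iff₀ hcpos] at h2m; linarith
  have := hgrow m
  have hb := (brem_mem hx (j+1+m)).1
  linarith

lemma bdig_exists_true {x : ℝ} (hx : x ∈ Set.Ico (0:ℝ) 1)
    (hxq : x ∉ Set.range ((↑) : ℚ → ℝ)) (j : ℕ) :
    ∃ k, bdig x (j+1+k) = true := by
  by_contra h
  push_neg at h
  simp only [Bool.not_eq_true] at h
  set c : ℝ := brem x (j+1) with hc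
  have hcpos : 0 < c := by
    have h0 := (brem_mem hx (j+1)).1
    have hne := brem_ne_zero hxq (j+1)
    rw [hc]; cases lt_or_eq_of_le h0 with
    | inl h => exact h
    | inr h => exact absurd h.symm hne
  have hgrow : ∀ k, 2^k * c ≤ brem x (j+1+k) := by
    intro k; induction k with
    | zero => simp [hc]
    | succ k ih =>
      have hstep : brem x (j+1+(k+1)) = 2 * brem x (j+1+k) := by
        rw [show j+1+(k+1) = (j+1+k)+1 by ring, brem_succ, h k]
        simp
      rw [hstep]
      have : (2:ℝ)^(k+1) * c = 2 * (2^k * c) := by ring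
      rw [this]
      linarith
  obtain ⟨m, hm⟩ := exists_nat_gt (1/c)
  have h2m : (1:ℝ)/c < 2^m := by
    have := Nat.lt_two_pow_self (n := m)
    have h2 : (m:ℝ) < 2^m := by exact_mod_cast this
    linarith
  have hlt : 1 < 2^m * c := by
    rw [div_lt_iff₀ hcpos] at h2m; linarith
  have := hgrow m
  have hb := (brem_mem hx (j+1+m)).2
  linarith

noncomputable def wmap (n : ℕ) (b : ℕ → Bool) : ℝ :=
  ∑' i, ((if b i then n - 1 else 0 : ℕ) : ℝ)/(n:ℝ)^(i+1)

section wmap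
variable {n : ℕ} (hn : 4 ≤ n)
include hn

lemma hNcast : (2:ℝ) ≤ (n:ℝ) := by
  have : (4:ℝ) ≤ (n:ℝ) := by exact_mod_cast hn
  linarith

lemma wdig_cast (b : Bool) : ((if b then n - 1 else 0 : ℕ) : ℝ)
    = (if b then (n:ℝ) - 1 else 0) := by
  cases b <;> simp
  · have h1 : 1 ≤ n := by omega
    push_cast [h1]; ring

lemma wdig_abs_le (b : Bool) : |((if b then n - 1 else 0 : ℕ) : ℝ)| ≤ (n:ℝ) - 1 := by
  rw [abs_of_nonneg (Nat.cast_nonneg _), wdig_cast hn]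
  have := hNcast hn
  cases b <;> simp <;> linarith

lemma wmap_summable (b : ℕ → Bool) :
    Summable (fun i => ((if b i then n - 1 else 0 : ℕ) : ℝ)/(n:ℝ)^(i+1)) :=
  summable_digSum (hNcast hn) (B := (n:ℝ) - 1) (fun i => wdig_abs_le hn _)

lemma wmap_mem_Icc (b : ℕ → Bool) : wmap n b ∈ Set.Icc (0:ℝ) 1 := by
  constructor
  · apply tsum_nonneg
    intro i
    positivity
  · have h := abs_digSum_le (hNcast hn) (B := (n:ℝ) - 1) (d := fun i => ((if b i then n - 1 else 0 : ℕ) : ℝ)) (fun i => wdig_abs_le hn _)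
    have hN := hNcast hn
    have h1 : ((n:ℝ) - 1)/((n:ℝ) - 1) = 1 := by
      apply div_self; linarith
    rw [h1] at h
    exact (abs_le.mp h).2

lemma wmap_sep {b b' : ℕ → Bool} (hne : b ≠ b') :
    ∃ j, (∀ i < j, b i = b' i) ∧ b j ≠ b' j ∧
      ((n:ℝ)-2)/(n:ℝ)^(j+1) ≤ |wmap n b - wmap n b'| := by
  have hex : ∃ i, b i ≠ b' i := by
    by_contra h; push_neg at h; exact hne (funext h)
  classical
  set j := Nat.find hex with hj
  have hjne : b j ≠ b' j := Nat.find_spec hex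
  have hpre : ∀ i < j, b i = b' i := fun i hi => by
    by_contra h; exact Nat.find_min hex hi h
  refine ⟨j, hpre, hjne, ?_⟩
  have hN := hNcast hn
  set d : ℕ → ℝ := fun i => ((if b i then n - 1 else 0 : ℕ) : ℝ) - ((if b' i then n - 1 else 0 : ℕ) : ℝ) with hd
  have hcast : ∀ v : Bool, ((if v then n - 1 else 0 : ℕ) : ℝ) = (if v then (n:ℝ) - 1 else 0) :=
    fun v => wdig_cast hn v
  have h4 : (4:ℝ) ≤ (n:ℝ) := by exact_mod_cast hn
  have hB : ∀ i, |d i| ≤ (n:ℝ) - 1 := by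
    intro i
    have hdi : d i = ((if b i then n - 1 else 0 : ℕ) : ℝ)
        - ((if b' i then n - 1 else 0 : ℕ) : ℝ) := rfl
    rw [hdi, hcast, hcast, abs_le]
    constructor <;> cases b i <;> cases b' i <;> simp <;> linarith
  have hdj : |d j| = (n:ℝ) - 1 := by
    have hdi : d j = ((if b j then n - 1 else 0 : ℕ) : ℝ)
        - ((if b' j then n - 1 else 0 : ℕ) : ℝ) := rfl
    rw [hdi, hcast, hcast]
    cases hb : b j <;> cases hb' : b' j
    · rw [hb, hb'] at hjne; exact absurd rfl hjne
    · simp only [Bool.false_eq_true, if_false, if_true, zero_sub, abs_neg]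
      rw [abs_of_nonneg (by linarith)]
    · simp only [Bool.false_eq_true, if_false, if_true, sub_zero]
      rw [abs_of_nonneg (by linarith)]
    · rw [hb, hb'] at hjne; exact absurd rfl hjne
  have hsub : wmap n b - wmap n b' = ∑' i, d i / (n:ℝ)^(i+1) := by
    rw [wmap, wmap, ← Summable.tsum_sub (wmap_summable hn b) (wmap_summable hn b')]
    apply tsum_congr; intro i
    have hdi : d i = ((if b i then n - 1 else 0 : ℕ) : ℝ)
        - ((if b' i then n - 1 else 0 : ℕ) : ℝ) := rfl
    rw [hdi]; ring
  have hpre' : ∀ i < j, d i = 0 := by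
    intro i hi
    have hdi : d i = ((if b i then n - 1 else 0 : ℕ) : ℝ)
        - ((if b' i then n - 1 else 0 : ℕ) : ℝ) := rfl
    rw [hdi, hpre i hi, sub_self]
  have hlow := (digSum_diff_bounds (hNcast hn) hB j hpre').2
  rw [hsub]
  refine le_trans ?_ hlow
  apply div_le_div_of_nonneg_right _ (by positivity)
  rw [hdj]
  have hdd : ((n:ℝ) - 1)/((n:ℝ) - 1) = 1 := div_self (by linarith)
  rw [hdd]
  ring_nf
  linarith

lemma wmap_inj : Function.Injective (fun b => 2 * wmap n b) := by
  intro b b' h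
  by_contra hne
  obtain ⟨j, _, _, hsep⟩ := wmap_sep hn hne
  have hN := hNcast hn
  have heq : wmap n b = wmap n b' := by
    simpa using h
  rw [heq, sub_self, abs_zero] at hsep
  have h4 : (4:ℝ) ≤ (n:ℝ) := by exact_mod_cast hn
  have : (0:ℝ) < ((n:ℝ)-2)/(n:ℝ)^(j+1) := by
    apply div_pos (by linarith) (by positivity)
  linarith
end wmap

theorem uniqueness_dim_lower' (n : ℕ) (hn : 4 ≤ n) (A : Set ℕ)
    (h0 : 0 ∈ A) (htop : n - 1 ∈ A) (hA : ∀ a ∈ A, a < n)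
    (h1 : 1 ∉ A) (h2 : n - 2 ∉ A) :
    ENNReal.ofReal (Real.log 2 / Real.log n) ≤
      dimH {z : ℝ | z ∈ Set.Icc (0 : ℝ) 2 ∧
        ∃! p : ℝ × ℝ, p.1 ∈ linCantor n A ∧ p.2 ∈ linCantor n A ∧
          p.1 ≤ p.2 ∧ p.1 + p.2 = z} ∧
    0 < ENNReal.ofReal (Real.log 2 / Real.log n) := by
  classical
  set α : ℝ := Real.log 2 / Real.log n with hα
  have hn1 : (1:ℝ) < (n:ℝ) := by
    have : (4:ℝ) ≤ (n:ℝ) := by exact_mod_cast hn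
    linarith
  have h4 : (4:ℝ) ≤ (n:ℝ) := by exact_mod_cast hn
  have hlogn : 0 < Real.log n := Real.log_pos hn1
  have hlog2 : 0 < Real.log 2 := Real.log_pos (by norm_num)
  have hαpos : 0 < α := div_pos hlog2 hlogn
  have hα1 : α * Real.log n = Real.log 2 := by
    rw [hα]; field_simp
  refine ⟨?_, ENNReal.ofReal_pos.mpr hαpos⟩
  set U := {z : ℝ | z ∈ Set.Icc (0 : ℝ) 2 ∧
        ∃! p : ℝ × ℝ, p.1 ∈ linCantor n A ∧ p.2 ∈ linCantor n A ∧
          p.1 ≤ p.2 ∧ p.1 + p.2 = z} with hU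
  set S : Set (ℕ → Bool) :=
    {b | (∀ j, ∃ k, b (j+1+k) = true) ∧ (∀ j, ∃ k, b (j+1+k) = false)} with hS
  set zf : (ℕ → Bool) → ℝ := fun b => 2 * wmap n b with hzf
  -- membership of wmap in linCantor
  have hwlin : ∀ b : ℕ → Bool, wmap n b ∈ linCantor n A := by
    intro b
    refine ⟨fun i => if b i then n - 1 else 0, fun i => ?_, rfl⟩
    rcases Bool.dichotomy (b i) with h|h <;> simp [h, h0, htop]
  -- Step A : zf '' S ⊆ U
  have hEU : zf '' S ⊆ U := by
    rintro _ ⟨b, hbS, rfl⟩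
    have hw01 := wmap_mem_Icc hn b
    constructor
    · exact ⟨by show (0:ℝ) ≤ 2 * wmap n b; linarith [hw01.1],
        by show (2:ℝ) * wmap n b ≤ 2; linarith [hw01.2]⟩
    refine ⟨(wmap n b, wmap n b), ⟨hwlin b, hwlin b, le_refl _, by show wmap n b + wmap n b = 2 * wmap n b; ring⟩, ?_⟩
    rintro ⟨x, y⟩ ⟨⟨a, ha, hxv⟩, ⟨a', ha', hyv⟩, hxy, hsum⟩
    dsimp only at hxv hyv hxy hsum
    have haLT : ∀ i, a i ≤ n - 1 := fun i => by have := hA _ (ha i); omega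
    have ha'LT : ∀ i, a' i ≤ n - 1 := fun i => by have := hA _ (ha' i); omega
    set s : ℕ → ℕ := fun i => a i + a' i with hsdef
    set c : ℕ → ℕ := fun i => 2 * (if b i then n - 1 else 0) with hcdef
    have hsv : ∀ i, s i = a i + a' i := fun i => rfl
    have hcv : ∀ i, c i = 2 * (if b i then n - 1 else 0) := fun i => rfl
    have hcast2 : ∀ i, ((c i : ℕ) : ℝ) = 2 * ((if b i then n - 1 else 0 : ℕ) : ℝ) := by
      intro i; rw [hcv]; push_cast; ring
    have hsummA : Summable (fun i => ((a i : ℕ):ℝ)/(n:ℝ)^(i+1)) := by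
      apply summable_digSum (hNcast hn) (B := (n:ℝ))
      intro i
      rw [abs_of_nonneg (Nat.cast_nonneg _)]
      exact_mod_cast le_of_lt (hA _ (ha i))
    have hsummA' : Summable (fun i => ((a' i : ℕ):ℝ)/(n:ℝ)^(i+1)) := by
      apply summable_digSum (hNcast hn) (B := (n:ℝ))
      intro i
      rw [abs_of_nonneg (Nat.cast_nonneg _)]
      exact_mod_cast le_of_lt (hA _ (ha' i))
    have heq : ∑' i, ((s i : ℕ):ℝ)/(n:ℝ)^(i+1) = ∑' i, ((c i : ℕ):ℝ)/(n:ℝ)^(i+1) := by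
      have hL : ∑' i, ((s i : ℕ):ℝ)/(n:ℝ)^(i+1) = x + y := by
        rw [hxv, hyv, ← Summable.tsum_add hsummA hsummA']
        apply tsum_congr; intro i
        have hv : ((s i : ℕ):ℝ) = (a i : ℝ) + (a' i : ℝ) := by rw [hsv]; push_cast; ring
        rw [hv]; ring
      have hR : ∑' i, ((c i : ℕ):ℝ)/(n:ℝ)^(i+1) = 2 * wmap n b := by
        rw [wmap, ← tsum_mul_left]
        apply tsum_congr; intro i
        rw [hcast2 i]; ring
      rw [hL, hR]
      exact hsum
    have hdig := digits_eq hn s c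
      (fun i => by have := haLT i; have := ha'LT i; rw [hsv]; omega)
      (fun i => by
        intro hcon
        rw [hsv] at hcon
        have hor : a i = 1 ∨ a' i = 1 := by omega
        cases hor with
        | inl h => exact h1 (h ▸ ha i)
        | inr h => exact h1 (h ▸ ha' i))
      (fun i => by
        intro hcon
        rw [hsv] at hcon
        have hai := haLT i; have hai' := ha'LT i
        have hor : a i = n - 2 ∨ a' i = n - 2 := by omega
        cases hor with
        | inl h => exact h2 (h ▸ ha i)
        | inr h => exact h2 (h ▸ ha' i))
      (fun i => by
        rw [hcv]
        rcases Bool.dichotomy (b i) with h|h <;> rw [h] <;> simp <;> omega)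
      (fun j => by
        obtain ⟨k, hk⟩ := hbS.1 j
        refine ⟨k, ?_⟩
        rw [hcv, hk]; simp; omega)
      (fun j => by
        obtain ⟨k, hk⟩ := hbS.2 j
        refine ⟨k, ?_⟩
        rw [hcv, hk]; simp)
      heq
    have hxw : x = wmap n b := by
      rw [hxv, wmap]
      apply tsum_congr; intro i
      have hci : a i + a' i = 2 * (if b i then n - 1 else 0) := hdig i
      have hai := haLT i; have hai' := ha'LT i
      congr 1
      have hv : a i = (if b i then n - 1 else 0) := by
        rcases Bool.dichotomy (b i) with h|h <;> rw [h] at hci ⊢ <;> simp at hci ⊢ <;> omega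
      exact congrArg (fun m : ℕ => (m:ℝ)) hv
    have hyw : y = wmap n b := by
      rw [hyv, wmap]
      apply tsum_congr; intro i
      have hci : a i + a' i = 2 * (if b i then n - 1 else 0) := hdig i
      have hai := haLT i; have hai' := ha'LT i
      congr 1
      have hv : a' i = (if b i then n - 1 else 0) := by
        rcases Bool.dichotomy (b i) with h|h <;> rw [h] at hci ⊢ <;> simp at hci ⊢ <;> omega
      exact congrArg (fun m : ℕ => (m:ℝ)) hv
    have hfin : (x, y) = (wmap n b, wmap n b) := by rw [hxw, hyw]
    exact hfin
  -- Step B : Hölder map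
  set r : ℝ≥0 := Real.toNNReal α with hrdef
  have hrα : (r : ℝ) = α := Real.coe_toNNReal α hαpos.le
  have hrpos : 0 < r := Real.toNNReal_pos.mpr hαpos
  have hinj : Function.Injective zf := wmap_inj hn
  set g : ℝ → ℝ := fun x => tauB (Function.invFun zf x) with hgdef
  have hgz : ∀ b, g (zf b) = tauB b := by
    intro b
    have : Function.invFun zf (zf b) = b := Function.leftInverse_invFun hinj b
    show tauB (Function.invFun zf (zf b)) = tauB b
    rw [this]
  have hpowkey : ∀ j : ℕ, ((n:ℝ)^(j+1)) ^ α = 2^(j+1) := by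
    intro j
    have hn0 : (0:ℝ) < n := by linarith
    rw [← Real.rpow_natCast (n:ℝ) (j+1), ← Real.rpow_mul hn0.le]
    rw [Real.rpow_def_of_pos hn0]
    have hexp : Real.log (n:ℝ) * (((j+1:ℕ):ℝ) * α) = ((j+1:ℕ):ℝ) * Real.log 2 := by
      rw [hα]; field_simp
    rw [hexp]
    have hlog : ((j+1:ℕ):ℝ) * Real.log 2 = Real.log (2^(j+1)) := by
      rw [Real.log_pow]
    rw [hlog, Real.exp_log (by positivity)]
  have hkey : ∀ b b' : ℕ → Bool, b ≠ b' → |tauB b - tauB b'| ≤ 2 * |zf b - zf b'| ^ α := by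
    intro b b' hbne
    obtain ⟨j, hpre, hjne, hsep⟩ := wmap_sep hn hbne
    have htau := tauB_bound b b' j hpre
    have habs0 : (0:ℝ) ≤ |wmap n b - wmap n b'| := abs_nonneg _
    have hX : (1:ℝ)/(n:ℝ)^(j+1) ≤ |zf b - zf b'| := by
      have hzz : zf b - zf b' = 2*(wmap n b - wmap n b') := by
        show 2 * wmap n b - 2 * wmap n b' = _; ring
      rw [hzz, abs_mul, abs_two]
      have hp : (0:ℝ) < (n:ℝ)^(j+1) := by positivity
      calc (1:ℝ)/(n:ℝ)^(j+1) ≤ ((n:ℝ)-2)/(n:ℝ)^(j+1) :=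
            div_le_div_of_nonneg_right (by linarith) hp.le
        _ ≤ |wmap n b - wmap n b'| := hsep
        _ ≤ 2 * |wmap n b - wmap n b'| := by linarith
    have hXα : (1:ℝ)/2^(j+1) ≤ |zf b - zf b'| ^ α := by
      have h1 : ((1:ℝ)/(n:ℝ)^(j+1)) ^ α ≤ |zf b - zf b'| ^ α :=
        Real.rpow_le_rpow (by positivity) hX hαpos.le
      have h2 : ((1:ℝ)/(n:ℝ)^(j+1)) ^ α = 1/2^(j+1) := by
        rw [one_div, one_div, Real.inv_rpow (by positivity), hpowkey j]
      linarith [h2 ▸ h1]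
    calc |tauB b - tauB b'| ≤ 2/2^(j+1) := htau
      _ = 2 * (1/2^(j+1)) := by ring
      _ ≤ 2 * |zf b - zf b'| ^ α := by linarith
  have hHolder : HolderOnWith 2 r g (zf '' S) := by
    rintro _ ⟨b, hbS, rfl⟩ _ ⟨b', hb'S, rfl⟩
    by_cases hbe : b = b'
    · subst hbe; rw [edist_self]; exact zero_le
    · have hx := hkey b b' hbe
      have hXpos : 0 < |zf b - zf b'| := by
        rw [abs_pos, sub_ne_zero]
        exact fun h => hbe (hinj h)
      rw [edist_dist, edist_dist, Real.dist_eq, Real.dist_eq, hrα,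
        ENNReal.ofReal_rpow_of_pos hXpos]
      calc ENNReal.ofReal |g (zf b) - g (zf b')|
          ≤ ENNReal.ofReal (2 * |zf b - zf b'| ^ α) := by
            apply ENNReal.ofReal_le_ofReal
            rw [hgz, hgz]
            exact hx
        _ = ((2:ℝ≥0):ℝ≥0∞) * ENNReal.ofReal (|zf b - zf b'| ^ α) := by
            rw [ENNReal.ofReal_mul (by norm_num : (0:ℝ) ≤ 2)]
            norm_num
  have hdim1 : dimH (g '' (zf '' S)) ≤ dimH (zf '' S) / r := hHolder.dimH_image_le hrpos
  set T : Set ℝ := Set.Ioo (0:ℝ) 1 \ Set.range ((↑) : ℚ → ℝ) with hT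
  have hTsub : T ⊆ g '' (zf '' S) := by
    rintro x ⟨hxI, hxQ⟩
    have hxI' : x ∈ Set.Ico (0:ℝ) 1 := ⟨hxI.1.le, hxI.2⟩
    have hbS : bdig x ∈ S :=
      ⟨fun j => bdig_exists_true hxI' hxQ j, fun j => bdig_exists_false hxI' j⟩
    exact ⟨zf (bdig x), ⟨bdig x, hbS, rfl⟩, by rw [hgz, tauB_bdig hxI']⟩
  have hT1 : (1:ℝ≥0∞) ≤ dimH T := by
    have hIoo : dimH (Set.Ioo (0:ℝ) 1) = 1 := by
      rw [Real.dimH_of_mem_nhds (x := (1/2:ℝ)) (isOpen_Ioo.mem_nhds (by norm_num))]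
      simp
    have hsub : Set.Ioo (0:ℝ) 1 ⊆ T ∪ Set.range ((↑) : ℚ → ℝ) := by
      intro x hx
      by_cases h : x ∈ Set.range ((↑) : ℚ → ℝ)
      · exact Or.inr h
      · exact Or.inl ⟨hx, h⟩
    have hmono := dimH_mono hsub
    rw [dimH_union, dimH_countable (Set.countable_range _), hIoo] at hmono
    simpa using hmono
  have h1le : (1:ℝ≥0∞) ≤ dimH (zf '' S) / r :=
    le_trans hT1 (le_trans (dimH_mono hTsub) hdim1)
  have hrle : (r : ℝ≥0∞) ≤ dimH (zf '' S) := by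
    rw [ENNReal.le_div_iff_mul_le
      (Or.inl (by exact_mod_cast hrpos.ne'))
      (Or.inl ENNReal.coe_ne_top), one_mul] at h1le
    exact h1le
  calc ENNReal.ofReal α = (r : ℝ≥0∞) := rfl
    _ ≤ dimH (zf '' S) := hrle
    _ ≤ dimH U := dimH_mono hEU

/-- If `A` is `n`-good and `1 ∉ A`, `n-2 ∉ A`, then
`dim_H(U_A) ≥ log 2 / log n > 0`. -/
theorem uniqueness_dim_lower (n : ℕ) (hn : 4 ≤ n) (A : Set ℕ)
    (h0 : 0 ∈ A) (htop : n - 1 ∈ A) (hA : ∀ a ∈ A, a < n)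
    (h1 : 1 ∉ A) (h2 : n - 2 ∉ A)
    (hgood : linCantor n A + linCantor n A = Set.Icc (0 : ℝ) 2) :
    ENNReal.ofReal (Real.log 2 / Real.log n) ≤
      dimH {z : ℝ | z ∈ Set.Icc (0 : ℝ) 2 ∧
        ∃! p : ℝ × ℝ, p.1 ∈ linCantor n A ∧ p.2 ∈ linCantor n A ∧
          p.1 ≤ p.2 ∧ p.1 + p.2 = z} ∧
    0 < ENNReal.ofReal (Real.log 2 / Real.log n) := by
  exact uniqueness_dim_lower' n hn A h0 htop hA h1 h2
end

section
/- Let A = {0,1,4} and n = 5. Then (7/5, 8/5) ∩ (C_{A,5} + C_{A,5}) = ∅; in particular C_{A,5} + C_{A,5} ≠ [0,2]. -/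
open Pointwise

lemma linCantor_bound {x : ℝ} (hx : x ∈ linCantor 5 {0, 1, 4}) :
    ∃ b : ℕ, b ∈ ({0, 1, 4} : Set ℕ) ∧ (b : ℝ) / 5 ≤ x ∧ x ≤ (b : ℝ) / 5 + 1 / 5 := by
  obtain ⟨a, ha, rfl⟩ := hx
  have hle : ∀ i, (a i : ℝ) ≤ 4 := by
    intro i
    have h := ha i
    simp only [Set.mem_insert_iff, Set.mem_singleton_iff] at h
    rcases h with h | h | h <;> simp [h]
  have hnn : ∀ i, (0 : ℝ) ≤ (a i : ℝ) / (5 : ℕ) ^ (i + 1) := by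
    intro i; positivity
  have hg : Summable (fun i : ℕ => (4 : ℝ) * (1 / 5) ^ (i + 1)) := by
    apply Summable.mul_left
    exact (summable_geometric_of_lt_one (by norm_num) (by norm_num)).comp_injective
      (add_left_injective 1)
  have hs : Summable (fun i : ℕ => (a i : ℝ) / (5 : ℕ) ^ (i + 1)) := by
    apply Summable.of_nonneg_of_le hnn _ hg
    intro i
    rw [div_le_iff₀ (by positivity)]
    calc (a i : ℝ) ≤ 4 := hle i
      _ = 4 * (1 / 5) ^ (i + 1) * (5 : ℕ) ^ (i + 1) := by
          push_cast; field_simp; rw [← mul_pow]; norm_num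
  refine ⟨a 0, ha 0, ?_, ?_⟩
  · have h0 : ((a 0 : ℝ) / (5 : ℕ) ^ (0 + 1)) = (a 0 : ℝ) / 5 := by norm_num
    calc (a 0 : ℝ) / 5 = (a 0 : ℝ) / (5 : ℕ) ^ (0 + 1) := by norm_num
      _ ≤ ∑' i, (a i : ℝ) / (5 : ℕ) ^ (i + 1) := Summable.le_tsum hs 0 (fun j _ => hnn j)
  · rw [Summable.tsum_eq_zero_add hs]
    have htail : ∑' i : ℕ, (a (i + 1) : ℝ) / (5 : ℕ) ^ (i + 1 + 1) ≤ 1 / 5 := by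
      have hg2 : Summable (fun i : ℕ => (4 / 25 : ℝ) * (1 / 5) ^ i) :=
        Summable.mul_left _ (summable_geometric_of_lt_one (by norm_num) (by norm_num))
      have := Summable.tsum_le_tsum (f := fun i : ℕ => (a (i + 1) : ℝ) / (5 : ℕ) ^ (i + 1 + 1))
        (g := fun i : ℕ => (4 / 25 : ℝ) * (1 / 5) ^ i) ?_ (hs.comp_injective (add_left_injective 1)) hg2
      · refine this.trans ?_
        rw [tsum_mul_left, tsum_geometric_of_lt_one (by norm_num) (by norm_num)]
        norm_num
      · intro i
        rw [div_le_iff₀ (by positivity)]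
        calc (a (i + 1) : ℝ) ≤ 4 := hle _
          _ = 4 / 25 * (1 / 5) ^ i * (5 : ℕ) ^ (i + 1 + 1) := by
              push_cast; field_simp; rw [pow_succ, pow_succ, ← mul_assoc, ← mul_assoc, ← mul_pow]; norm_num
    have h0 : ((a 0 : ℝ) / (5 : ℕ) ^ (0 + 1)) = (a 0 : ℝ) / 5 := by norm_num
    rw [h0]
    linarith

/-- For `A = {0,1,4}`, `n = 5`: `(7/5, 8/5)` misses `C_A + C_A`, so `A` is not
`5`-good. -/
theorem not_good_014 :
    Set.Ioo (7 / 5 : ℝ) (8 / 5) ∩ (linCantor 5 {0, 1, 4} + linCantor 5 {0, 1, 4}) = ∅ ∧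
    linCantor 5 {0, 1, 4} + linCantor 5 {0, 1, 4} ≠ Set.Icc (0 : ℝ) 2 := by
  have key : Set.Ioo (7 / 5 : ℝ) (8 / 5) ∩ (linCantor 5 {0, 1, 4} + linCantor 5 {0, 1, 4}) = ∅ := by
    ext x
    simp only [Set.mem_inter_iff, Set.mem_empty_iff_false, iff_false, not_and]
    rintro ⟨h1, h2⟩ ⟨y, hy, z, hz, rfl⟩
    obtain ⟨b, hb, hb1, hb2⟩ := linCantor_bound hy
    obtain ⟨c, hc, hc1, hc2⟩ := linCantor_bound hz
    rcases hb with rfl | rfl | rfl <;> rcases hc with rfl | rfl | rfl <;>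
      push_cast at hb1 hb2 hc1 hc2 <;> linarith
  refine ⟨key, fun h => ?_⟩
  have h32 : (3 / 2 : ℝ) ∈ linCantor 5 {0, 1, 4} + linCantor 5 {0, 1, 4} := by
    rw [h]; constructor <;> norm_num
  have : (3 / 2 : ℝ) ∈ Set.Ioo (7 / 5 : ℝ) (8 / 5) ∩ (linCantor 5 {0, 1, 4} + linCantor 5 {0, 1, 4}) :=
    ⟨by constructor <;> norm_num, h32⟩
  rw [key] at this
  exact this
end

section
/- Let n = 5 and A = {0,1,7,8} ⊆ ℤ. Then C_{A,5} + C_{A,5} = [0, 6/5] ∪ [7/5, 13/5] ∪ [14/5, 4], a union of exactly three disjoint closed intervals. -/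
open Pointwise

namespace Sum0178

/-- the digit set of the sumset -/
def B : Set ℕ := {0, 1, 2, 7, 8, 9, 14, 15, 16}

/-- the target union of intervals -/
def I : Set ℝ :=
  Set.Icc (0 : ℝ) (6 / 5) ∪ Set.Icc (7 / 5 : ℝ) (13 / 5) ∪ Set.Icc (14 / 5 : ℝ) 4

lemma geom_eq : (fun i : ℕ => (16:ℝ) / 5 ^ (i+1)) = fun i => (16/5) * (1/5)^i := by
  funext i; rw [one_div, inv_pow, pow_succ]; field_simp

lemma summable_geom : Summable (fun i : ℕ => (16:ℝ) / 5 ^ (i+1)) := by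
  rw [geom_eq]
  exact (summable_geometric_of_lt_one (by norm_num) (by norm_num)).mul_left _

lemma tsum_geom : ∑' i : ℕ, (16:ℝ) / 5 ^ (i+1) = 4 := by
  rw [geom_eq, tsum_mul_left, tsum_geometric_of_lt_one (by norm_num) (by norm_num)]
  norm_num

lemma summable_digits (b : ℕ → ℕ) (hb : ∀ i, b i ≤ 16) :
    Summable (fun i => (b i : ℝ) / 5 ^ (i+1)) := by
  refine Summable.of_nonneg_of_le (fun i => by positivity) (fun i => ?_) summable_geom
  have : (b i : ℝ) ≤ 16 := by exact_mod_cast hb i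
  gcongr

lemma tsum_digits_mem (b : ℕ → ℕ) (hb : ∀ i, b i ≤ 16) :
    (∑' i : ℕ, (b i : ℝ) / 5 ^ (i+1)) ∈ Set.Icc (0:ℝ) 4 := by
  refine ⟨tsum_nonneg fun i => by positivity, ?_⟩
  have h1 : (∑' i : ℕ, (b i : ℝ) / 5 ^ (i+1)) ≤ ∑' i : ℕ, (16:ℝ) / 5 ^ (i+1) := by
    refine Summable.tsum_le_tsum (fun i => ?_) (summable_digits b hb) summable_geom
    have : (b i : ℝ) ≤ 16 := by exact_mod_cast hb i
    gcongr
  rw [tsum_geom] at h1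
  exact h1

lemma tsum_digits_split (b : ℕ → ℕ) (hb : ∀ i, b i ≤ 16) :
    (∑' i : ℕ, (b i : ℝ) / 5 ^ (i+1)) =
      (b 0 : ℝ) / 5 + (1/5) * ∑' i : ℕ, (b (i+1) : ℝ) / 5 ^ (i+1) := by
  rw [Summable.tsum_eq_zero_add (summable_digits b hb)]
  congr 1
  · norm_num
  · rw [← tsum_mul_left]
    congr 1; funext i
    rw [pow_succ]
    ring

lemma memB_le {n : ℕ} (hn : n ∈ B) : n ≤ 16 := by
  rcases hn with h|h|h|h|h|h|h|h|h <;> simp_all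

/-- covering lemma on [0,6] -/
lemma cover6 (z : ℝ) (h0 : 0 ≤ z) (h6 : z ≤ 6) :
    ∃ c : ℕ, c ≤ 2 ∧ (z - c) ∈ I := by
  rcases le_or_gt z (6/5) with h | h
  · exact ⟨0, by norm_num, Or.inl (Or.inl ⟨by norm_num [h0], by norm_num [h]⟩)⟩
  rcases le_or_gt z (11/5) with h2 | h2
  · exact ⟨1, by norm_num, Or.inl (Or.inl ⟨by push_cast; linarith, by push_cast; linarith⟩)⟩
  rcases le_or_gt z (16/5) with h3 | h3
  · exact ⟨2, by norm_num, Or.inl (Or.inl ⟨by push_cast; linarith, by push_cast; linarith⟩)⟩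
  rcases le_or_gt z (18/5) with h4 | h4
  · exact ⟨1, by norm_num, Or.inl (Or.inr ⟨by push_cast; linarith, by push_cast; linarith⟩)⟩
  rcases le_or_gt z (23/5) with h5 | h5
  · exact ⟨2, by norm_num, Or.inl (Or.inr ⟨by push_cast; linarith, by push_cast; linarith⟩)⟩
  rcases le_or_gt z 5 with h6' | h6'
  · exact ⟨1, by norm_num, Or.inr ⟨by push_cast; linarith, by push_cast; linarith⟩⟩
  · exact ⟨2, by norm_num, Or.inr ⟨by push_cast; linarith, by push_cast; linarith⟩⟩

lemma le2_memB_add {c : ℕ} (hc : c ≤ 2) (k : ℕ) (hk : k = 0 ∨ k = 7 ∨ k = 14) :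
    c + k ∈ B := by
  interval_cases c <;> rcases hk with rfl|rfl|rfl <;> simp [B]

lemma step (y : ℝ) (hy : y ∈ I) : ∃ b : ℕ, b ∈ B ∧ (5*y - b) ∈ I := by
  rcases hy with (⟨h0, h1⟩|⟨h0, h1⟩)|⟨h0, h1⟩
  · obtain ⟨c, hc2, hcI⟩ := cover6 (5*y) (by linarith) (by linarith)
    exact ⟨c + 0, le2_memB_add hc2 0 (by norm_num), by push_cast; simpa using hcI⟩
  · obtain ⟨c, hc2, hcI⟩ := cover6 (5*y - 7) (by linarith) (by linarith)
    refine ⟨c + 7, le2_memB_add hc2 7 (by norm_num), ?_⟩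
    have : 5*y - ((c:ℝ) + 7) = (5*y - 7) - c := by ring
    rw [Nat.cast_add]; push_cast; rw [this]; exact hcI
  · obtain ⟨c, hc2, hcI⟩ := cover6 (5*y - 14) (by linarith) (by linarith)
    refine ⟨c + 14, le2_memB_add hc2 14 (by norm_num), ?_⟩
    have : 5*y - ((c:ℝ) + 14) = (5*y - 14) - c := by ring
    rw [Nat.cast_add]; push_cast; rw [this]; exact hcI

lemma I_subset_Icc : I ⊆ Set.Icc (0:ℝ) 4 := by
  rintro x ((⟨h0,h1⟩|⟨h0,h1⟩)|⟨h0,h1⟩) <;> constructor <;> linarith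

/-- Every point of `I` lies in `linCantor 5 B`. -/
lemma I_subset : I ⊆ linCantor 5 B := by
  intro x hx
  choose f hfB hfI using step
  let G : {y : ℝ // y ∈ I} → {y : ℝ // y ∈ I} :=
    fun p => ⟨5 * p.1 - f p.1 p.2, hfI p.1 p.2⟩
  let Y : ℕ → {y : ℝ // y ∈ I} := fun k => G^[k] ⟨x, hx⟩
  let a : ℕ → ℕ := fun k => f (Y k).1 (Y k).2
  have hYsucc : ∀ k, (Y (k+1)).1 = 5 * (Y k).1 - a k := by
    intro k
    show (G^[k+1] ⟨x, hx⟩).1 = _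
    rw [Function.iterate_succ_apply']
  have haB : ∀ k, a k ∈ B := fun k => hfB _ _
  have key : ∀ k, x = (∑ i ∈ Finset.range k, (a i : ℝ) / 5 ^ (i+1)) + (Y k).1 / 5 ^ k := by
    intro k
    induction k with
    | zero => simp [Y]
    | succ k ih =>
      rw [Finset.sum_range_succ, hYsucc k]
      rw [ih]
      field_simp
      ring
  have hsummable := summable_digits a (fun i => memB_le (haB i))
  have htendsto : Filter.Tendsto (fun k => ∑ i ∈ Finset.range k, (a i : ℝ) / 5 ^ (i+1))
      Filter.atTop (nhds x) := by
    have hb : ∀ k, x - 4 * (1/5)^k ≤ ∑ i ∈ Finset.range k, (a i : ℝ) / 5 ^ (i+1) := by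
      intro k
      have hm := I_subset_Icc (Y k).2
      have h1 : (Y k).1 / 5 ^ k ≤ 4 * (1/5)^k := by
        rw [one_div, inv_pow, ← div_eq_mul_inv]
        gcongr
        exact hm.2
      have := key k
      linarith
    have ht : ∀ k, ∑ i ∈ Finset.range k, (a i : ℝ) / 5 ^ (i+1) ≤ x := by
      intro k
      have hm := I_subset_Icc (Y k).2
      have h1 : 0 ≤ (Y k).1 / 5 ^ k := div_nonneg hm.1 (by positivity)
      have := key k
      linarith
    refine tendsto_of_tendsto_of_tendsto_of_le_of_le (g := fun k => x - 4 * (1/5:ℝ)^k)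
      (h := fun _ => x) ?_ tendsto_const_nhds hb ht
    have : Filter.Tendsto (fun k : ℕ => 4 * (1/5:ℝ)^k) Filter.atTop (nhds 0) := by
      simpa using (tendsto_pow_atTop_nhds_zero_of_lt_one (by norm_num : (0:ℝ) ≤ 1/5)
        (by norm_num : (1/5:ℝ) < 1)).const_mul (4:ℝ)
    simpa using tendsto_const_nhds.sub this
  have hx' : HasSum (fun i => (a i : ℝ) / 5 ^ (i+1)) x :=
    (hsummable.hasSum_iff_tendsto_nat).mpr htendsto
  refine ⟨a, haB, ?_⟩
  rw [← hx'.tsum_eq]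
  push_cast
  rfl

/-- `linCantor 5 B` is contained in `I`. -/
lemma subset_I : linCantor 5 B ⊆ I := by
  rintro x ⟨b, hbB, rfl⟩
  have hble : ∀ i, b i ≤ 16 := fun i => memB_le (hbB i)
  have h5 : ((5:ℕ):ℝ) = 5 := by norm_num
  have hx : (∑' i : ℕ, (b i : ℝ) / (5:ℕ) ^ (i+1)) =
      (b 0 : ℝ) / 5 + (1/5) * ∑' i : ℕ, (b (i+1) : ℝ) / 5 ^ (i+1) := by
    push_cast
    exact tsum_digits_split b hble
  rw [hx]
  have hr := tsum_digits_mem (fun i => b (i+1)) (fun i => hble (i+1))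
  set r := ∑' i : ℕ, (b (i+1) : ℝ) / 5 ^ (i+1) with hrdef
  obtain ⟨hr0, hr4⟩ := hr
  have h0 := hbB 0
  rcases h0 with h|h|h|h|h|h|h|h|h <;> (try simp only [Set.mem_singleton_iff] at h) <;>
    rw [h] <;> push_cast <;>
    first
    | exact Or.inl (Or.inl ⟨by linarith, by linarith⟩)
    | exact Or.inl (Or.inr ⟨by linarith, by linarith⟩)
    | exact Or.inr ⟨by linarith, by linarith⟩

/-- decomposition of digits in B as sums of two digits in {0,1,7,8} -/
def dec : ℕ → ℕ × ℕ
  | 0 => (0,0) | 1 => (0,1) | 2 => (1,1) | 7 => (0,7) | 8 => (0,8)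
  | 9 => (1,8) | 14 => (7,7) | 15 => (7,8) | 16 => (8,8) | _ => (0,0)

def A : Set ℕ := {0, 1, 7, 8}

lemma dec_spec {n : ℕ} (hn : n ∈ B) :
    (dec n).1 ∈ A ∧ (dec n).2 ∈ A ∧ (dec n).1 + (dec n).2 = n := by
  rcases hn with h|h|h|h|h|h|h|h|h <;> (try simp only [Set.mem_singleton_iff] at h) <;>
    subst h <;> refine ⟨?_, ?_, rfl⟩ <;> simp [A, dec]

lemma memA_le {n : ℕ} (hn : n ∈ A) : n ≤ 16 := by
  rcases hn with h|h|h|h <;> simp_all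

lemma addA_memB {m n : ℕ} (hm : m ∈ A) (hn : n ∈ A) : m + n ∈ B := by
  rcases hm with h|h|h|h <;> rcases hn with h'|h'|h'|h' <;>
    (try simp only [Set.mem_singleton_iff] at h h') <;> subst h <;> subst h' <;> simp [B]

lemma sumset_eq : linCantor 5 A + linCantor 5 A = linCantor 5 B := by
  ext x
  constructor
  · rintro ⟨u, ⟨a, haA, rfl⟩, v, ⟨a', ha'A, rfl⟩, rfl⟩
    refine ⟨fun i => a i + a' i, fun i => addA_memB (haA i) (ha'A i), ?_⟩
    have hA := summable_digits a (fun i => memA_le (haA i))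
    have hA' := summable_digits a' (fun i => memA_le (ha'A i))
    show (∑' i : ℕ, (a i : ℝ) / (5:ℕ) ^ (i+1)) + (∑' i : ℕ, (a' i : ℝ) / (5:ℕ) ^ (i+1)) = _
    simp only [Nat.cast_ofNat]
    rw [← Summable.tsum_add hA hA']
    congr 1; funext i; push_cast; ring
  · rintro ⟨b, hbB, rfl⟩
    have h1 := fun i => dec_spec (hbB i)
    refine ⟨∑' i : ℕ, ((dec (b i)).1 : ℝ) / 5 ^ (i+1),
      ⟨fun i => (dec (b i)).1, fun i => (h1 i).1, by push_cast; rfl⟩,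
      ∑' i : ℕ, ((dec (b i)).2 : ℝ) / 5 ^ (i+1),
      ⟨fun i => (dec (b i)).2, fun i => (h1 i).2.1, by push_cast; rfl⟩, ?_⟩
    show (∑' i : ℕ, ((dec (b i)).1 : ℝ) / 5 ^ (i+1)) + (∑' i : ℕ, ((dec (b i)).2 : ℝ) / 5 ^ (i+1)) = _
    simp only [Nat.cast_ofNat]
    rw [← Summable.tsum_add (summable_digits _ (fun i => memA_le (h1 i).1))
        (summable_digits _ (fun i => memA_le (h1 i).2.1))]
    congr 1; funext i
    rw [← add_div]
    congr 1
    exact_mod_cast congrArg (Nat.cast (R := ℝ)) (h1 i).2.2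

end Sum0178

open Sum0178 in
/-- For `A = {0,1,7,8}` and `n = 5`, the sumset `C_{A,5} + C_{A,5}` is the union
of exactly three disjoint closed intervals. -/
theorem sum_0178 :
    linCantor 5 {0, 1, 7, 8} + linCantor 5 {0, 1, 7, 8} =
      Set.Icc (0 : ℝ) (6 / 5) ∪ Set.Icc (7 / 5 : ℝ) (13 / 5) ∪
        Set.Icc (14 / 5 : ℝ) 4 := by
  have : linCantor 5 {0, 1, 7, 8} = linCantor 5 A := rfl
  rw [this, sumset_eq]
  exact Set.Subset.antisymm subset_I I_subset
end
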